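/- arXiv:0905.1296 — 8 statements merged into one kernel-verified Lean document; each statement's English description precedes it below -/
import Mathlib

section
/- Let M = M₁ ⊗̄ M₂ be the von Neumann tensor product of von Neumann algebras M₁ and M₂, and let ν be a bounded (not necessarily normal) linear functional on M₁. Then there is a unique bounded linear map ν ⊗_M id₂ : M → M₂ satisfying φ ∘ (ν ⊗_M id₂) = ν ∘ (id₁ ⊗̄ φ) for all normal functionals φ on M₂, and its norm equals ‖ν‖. -/
open Filter Topology

/-- Tomiyama slice maps. Let `M = M₁ ⊗̄ M₂` be the von Neumann
tensor product of von Neumann algebras `M₁` and `M₂` (modelled abstractly: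
`J : M₂ ≃ E*` is the predual duality, `slice φ = id₁ ⊗̄ φ` are the normal slice
maps, and `tp` is the embedding of elementary tensors), and let `ν` be a bounded
linear functional on `M₁`.  Then there is a unique bounded linear map
`ν ⊗_M id₂ : M → M₂` with `φ ∘ (ν ⊗_M id₂) = ν ∘ (id₁ ⊗̄ φ)` for all normal
functionals `φ ∈ (M₂)_*`, and its norm equals `‖ν‖`. -/
theorem tomiyama_slice_map
    {M M₁ M₂ E : Type*}
    [NormedAddCommGroup M] [NormedSpace ℂ M] [CompleteSpace M]
    [NormedAddCommGroup M₁] [NormedSpace ℂ M₁] [CompleteSpace M₁]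
    [NormedAddCommGroup M₂] [NormedSpace ℂ M₂] [CompleteSpace M₂] [Nontrivial M₂]
    [NormedAddCommGroup E] [NormedSpace ℂ E] [CompleteSpace E]
    -- predual duality : `M₂ = ((M₂)_*)* = E*`
    (J : M₂ ≃ₗᵢ[ℂ] StrongDual ℂ E)
    -- the normal slice maps `φ ↦ id₁ ⊗̄ φ : M → M₁`, `φ ∈ (M₂)_* = E`
    (slice : E →ₗ[ℂ] (M →L[ℂ] M₁))
    (hslice_norm : ∀ φ : E, ‖slice φ‖ ≤ ‖φ‖)
    -- elementary tensors `a ⊗ b ∈ M₁ ⊗̄ M₂ = M`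
    (tp : M₁ →ₗ[ℂ] M₂ →ₗ[ℂ] M)
    (htp_norm : ∀ a b, ‖tp a b‖ ≤ ‖a‖ * ‖b‖)
    (htp_slice : ∀ (φ : E) (a : M₁) (b : M₂), slice φ (tp a b) = (J b φ) • a)
    (ν : M₁ →L[ℂ] ℂ) :
    ∃! T : M →L[ℂ] M₂,
      (∀ (φ : E) (x : M), J (T x) φ = ν (slice φ x)) ∧ ‖T‖ = ‖ν‖ := by

  classical
  -- the functional `φ ↦ ν (slice φ x)` on `E`, for fixed `x`
  have Fbound : ∀ (x : M) (φ : E), ‖ν (slice φ x)‖ ≤ ‖ν‖ * ‖x‖ * ‖φ‖ := by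
    intro x φ
    calc ‖ν (slice φ x)‖ ≤ ‖ν‖ * ‖slice φ x‖ := ν.le_opNorm _
      _ ≤ ‖ν‖ * (‖slice φ‖ * ‖x‖) := by
          gcongr
          exact (slice φ).le_opNorm x
      _ ≤ ‖ν‖ * (‖φ‖ * ‖x‖) := by
          gcongr
          exact hslice_norm φ
      _ = ‖ν‖ * ‖x‖ * ‖φ‖ := by ring
  let F : M → (E →L[ℂ] ℂ) := fun x =>
    LinearMap.mkContinuous
      { toFun := fun φ => ν (slice φ x)
        map_add' := fun φ ψ => by simp [map_add]
        map_smul' := fun c φ => by simp }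
      (‖ν‖ * ‖x‖) (Fbound x)
  have hF : ∀ (x : M) (φ : E), F x φ = ν (slice φ x) := fun _ _ => rfl
  have hFnorm : ∀ x : M, ‖F x‖ ≤ ‖ν‖ * ‖x‖ := fun x =>
    LinearMap.mkContinuous_norm_le _ (by positivity) _
  let T : M →L[ℂ] M₂ :=
    LinearMap.mkContinuous
      { toFun := fun x => J.symm (F x)
        map_add' := fun x y => by
          rw [← map_add]
          apply congrArg
          ext φ
          simp [hF, map_add]
        map_smul' := fun c x => by
          show J.symm (F (c • x)) = (RingHom.id ℂ) c • J.symm (F x)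
          rw [RingHom.id_apply, ← map_smul]
          apply congrArg
          ext φ
          simp [hF] }
      ‖ν‖
      (fun x => by
        show ‖J.symm (F x)‖ ≤ ‖ν‖ * ‖x‖
        rw [J.symm.norm_map]
        exact hFnorm x)
  have hTkey : ∀ (φ : E) (x : M), J (T x) φ = ν (slice φ x) := by
    intro φ x
    show J (J.symm (F x)) φ = _
    rw [J.apply_symm_apply]
    exact hF x φ
  -- action on elementary tensors
  have hTtp : ∀ (a : M₁) (b : M₂), T (tp a b) = ν a • b := by
    intro a b
    apply J.injective
    ext φ
    rw [hTkey, htp_slice, map_smul]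
    simp [mul_comm]
  -- norm computation
  have hTle : ‖T‖ ≤ ‖ν‖ :=
    LinearMap.mkContinuous_norm_le _ (norm_nonneg ν) _
  have hTnorm : ‖T‖ = ‖ν‖ := by
    refine le_antisymm hTle ?_
    obtain ⟨b, hb⟩ := exists_ne (0 : M₂)
    have hbpos : (0:ℝ) < ‖b‖ := norm_pos_iff.mpr hb
    refine ν.opNorm_le_bound (norm_nonneg T) (fun a => ?_)
    have h1 : ‖ν a‖ * ‖b‖ ≤ ‖T‖ * (‖a‖ * ‖b‖) := by
      calc ‖ν a‖ * ‖b‖ = ‖T (tp a b)‖ := by rw [hTtp]; simp [norm_smul]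
        _ ≤ ‖T‖ * ‖tp a b‖ := T.le_opNorm _
        _ ≤ ‖T‖ * (‖a‖ * ‖b‖) := by gcongr; exact htp_norm a b
    have := (mul_le_mul_iff_of_pos_right hbpos).mp (by linarith [h1] : ‖ν a‖ * ‖b‖ ≤ (‖T‖ * ‖a‖) * ‖b‖)
    exact this
  refine ⟨T, ⟨hTkey, hTnorm⟩, ?_⟩
  intro T' ⟨hT'key, _⟩
  ext x
  apply J.injective
  ext φ
  rw [hT'key, hTkey]
end

section
/- In a unital Banach algebra A with identity e, every semigroup (x_t)_{t≥0} (x₀ = e, x_{s+t} = x_s x_t) that is norm-continuous at 0 (‖x_t − e‖ → 0) has a generator: there is a unique a ∈ A with ‖(1/t)(x_t − e) − a‖ → 0 as t → 0⁺, and x_t = exp(ta) = Σ_{n≥0} (ta)ⁿ/n! for all t ≥ 0. -/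
open Filter Topology Set intervalIntegral MeasureTheory

private theorem sgSmall' {A : Type*} [NormedRing A] [NormedAlgebra ℝ A]
    (x : ℝ → A)
    (hcont : Tendsto (fun t => ‖x t - 1‖) (𝓝[>] (0 : ℝ)) (𝓝 0))
    {ε : ℝ} (hε : 0 < ε) :
    ∃ δ > 0, ∀ t ∈ Ioc (0:ℝ) δ, ‖x t - 1‖ < ε := by
  have h := hcont.eventually (eventually_lt_nhds hε)
  rw [eventually_nhdsWithin_iff] at h
  rcases Metric.eventually_nhds_iff.mp h with ⟨δ, hδ, hδ'⟩
  refine ⟨δ/2, by linarith, fun t ht => ?_⟩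
  exact hδ' (by rw [Real.dist_eq, sub_zero, abs_of_pos ht.1]; linarith [ht.2]) ht.1

private theorem sgBound' {A : Type*} [NormedRing A] [NormedAlgebra ℝ A]
    (x : ℝ → A)
    (hsg : ∀ s t : ℝ, 0 ≤ s → 0 ≤ t → x (s + t) = x s * x t)
    {δ₀ C : ℝ} (hδ₀ : 0 < δ₀) (hC : 1 ≤ C)
    (h : ∀ t ∈ Icc (0:ℝ) δ₀, ‖x t‖ ≤ C) :
    ∀ n : ℕ, ∀ t ∈ Icc (0:ℝ) ((n+1) * δ₀), ‖x t‖ ≤ C ^ (n+1) := by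
  intro n
  induction n with
  | zero => intro t ht; simpa using h t (by simpa using ht)
  | succ n ih =>
    intro t ht
    rcases le_or_gt t ((n+1) * δ₀) with h1 | h1
    · calc ‖x t‖ ≤ C ^ (n+1) := ih t ⟨ht.1, h1⟩
        _ ≤ C ^ (n+2) := pow_le_pow_right₀ hC (by omega)
    · have hts : 0 ≤ t - δ₀ := by nlinarith
      have : x t = x (t - δ₀) * x δ₀ := by
        have := hsg (t - δ₀) δ₀ hts hδ₀.le
        simpa using this
      rw [this]
      calc ‖x (t - δ₀) * x δ₀‖ ≤ ‖x (t - δ₀)‖ * ‖x δ₀‖ := norm_mul_le _ _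
        _ ≤ C ^ (n+1) * C := by
            apply mul_le_mul (ih _ ⟨hts, by push_cast at ht ⊢; linarith [ht.2]⟩)
              (h δ₀ ⟨hδ₀.le, le_refl _⟩) (norm_nonneg _) (by positivity)
        _ = C ^ (n+2) := by ring

private theorem sgBdd' {A : Type*} [NormedRing A] [NormedAlgebra ℝ A]
    (x : ℝ → A)
    (h0 : x 0 = 1)
    (hsg : ∀ s t : ℝ, 0 ≤ s → 0 ≤ t → x (s + t) = x s * x t)
    (hcont : Tendsto (fun t => ‖x t - 1‖) (𝓝[>] (0 : ℝ)) (𝓝 0))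
    (T : ℝ) :
    ∃ M : ℝ, 1 ≤ M ∧ ∀ t ∈ Icc (0:ℝ) T, ‖x t‖ ≤ M := by
  obtain ⟨δ₀, hδ₀, hδ₀'⟩ := sgSmall' x hcont one_pos
  set C := 1 + ‖(1:A)‖ with hCdef
  have hC : 1 ≤ C := by nlinarith [norm_nonneg (1:A)]
  have hbase : ∀ t ∈ Icc (0:ℝ) δ₀, ‖x t‖ ≤ C := by
    intro t ht
    rcases eq_or_lt_of_le ht.1 with h | h
    · rw [← h, h0]; linarith
    · calc ‖x t‖ ≤ ‖x t - 1‖ + ‖(1:A)‖ := by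
            simpa using norm_add_le (x t - 1) 1
        _ ≤ C := by linarith [le_of_lt (hδ₀' t ⟨h, ht.2⟩)]
  obtain ⟨n, hn⟩ := exists_nat_ge (T / δ₀)
  refine ⟨C ^ (n+1), one_le_pow₀ hC, fun t ht => ?_⟩
  apply sgBound' x hsg hδ₀ hC hbase n t
  refine ⟨ht.1, ?_⟩
  have : T ≤ (n+1) * δ₀ := by
    rw [div_le_iff₀ hδ₀] at hn
    nlinarith
  linarith [ht.2]

private theorem sgContOn' {A : Type*} [NormedRing A] [NormedAlgebra ℝ A]
    (x : ℝ → A)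
    (h0 : x 0 = 1)
    (hsg : ∀ s t : ℝ, 0 ≤ s → 0 ≤ t → x (s + t) = x s * x t)
    (hcont : Tendsto (fun t => ‖x t - 1‖) (𝓝[>] (0 : ℝ)) (𝓝 0)) :
    ContinuousOn x (Ici 0) := by
  intro t₀ ht₀
  obtain ⟨M, hM1, hM⟩ := sgBdd' x h0 hsg hcont (t₀ + 1)
  have hM0 : 0 < M := lt_of_lt_of_le one_pos hM1
  rw [Metric.continuousWithinAt_iff]
  intro ε hε
  obtain ⟨η, hη, hη'⟩ := sgSmall' x hcont (div_pos hε hM0)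
  refine ⟨min η 1, lt_min hη one_pos, fun s hs hds => ?_⟩
  rcases lt_trichotomy s t₀ with h | h | h
  · have hd : t₀ - s ∈ Ioc (0:ℝ) η := by
      refine ⟨by linarith, ?_⟩
      rw [Real.dist_eq] at hds
      linarith [(abs_lt.mp hds).1, min_le_left η (1:ℝ)]
    have hx : x t₀ = x s * x (t₀ - s) := by
      have := hsg s (t₀ - s) hs (by linarith)
      simpa using this
    rw [dist_eq_norm, norm_sub_rev, hx]
    have he : x s * x (t₀ - s) - x s = x s * (x (t₀ - s) - 1) := by
      rw [mul_sub, mul_one]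
    rw [he]
    calc ‖x s * (x (t₀ - s) - 1)‖ ≤ ‖x s‖ * ‖x (t₀ - s) - 1‖ := norm_mul_le _ _
      _ ≤ M * ‖x (t₀ - s) - 1‖ :=
          mul_le_mul_of_nonneg_right (hM s ⟨hs, by linarith⟩) (norm_nonneg _)
      _ < M * (ε / M) := mul_lt_mul_of_pos_left (hη' _ hd) hM0
      _ = ε := by field_simp
  · simp [h, hε]
  · have hd : s - t₀ ∈ Ioc (0:ℝ) η := by
      refine ⟨by linarith, ?_⟩
      rw [Real.dist_eq] at hds
      linarith [(abs_lt.mp hds).2, min_le_left η (1:ℝ)]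
    have hx : x s = x t₀ * x (s - t₀) := by
      have := hsg t₀ (s - t₀) ht₀ (by linarith)
      simpa using this
    rw [dist_eq_norm, hx]
    have he : x t₀ * x (s - t₀) - x t₀ = x t₀ * (x (s - t₀) - 1) := by
      rw [mul_sub, mul_one]
    rw [he]
    calc ‖x t₀ * (x (s - t₀) - 1)‖ ≤ ‖x t₀‖ * ‖x (s - t₀) - 1‖ := norm_mul_le _ _
      _ ≤ M * ‖x (s - t₀) - 1‖ :=
          mul_le_mul_of_nonneg_right (hM t₀ ⟨ht₀, by linarith⟩) (norm_nonneg _)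
      _ < M * (ε / M) := mul_lt_mul_of_pos_left (hη' _ hd) hM0
      _ = ε := by field_simp

/-- In a unital Banach algebra, every one-parameter semigroup
`(x_t)_{t ≥ 0}` (`x₀ = 1`, `x_{s+t} = x_s x_t`) which is norm-continuous at `0`
has a generator: a unique `a` with `‖(1/t)(x_t − 1) − a‖ → 0` as `t → 0⁺`, and
then `x_t = exp(t a)` for all `t ≥ 0`. -/
theorem banach_algebra_semigroup_generator
    {A : Type*} [NormedRing A] [NormedAlgebra ℝ A] [CompleteSpace A]
    (x : ℝ → A)
    (h0 : x 0 = 1)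
    (hsg : ∀ s t : ℝ, 0 ≤ s → 0 ≤ t → x (s + t) = x s * x t)
    (hcont : Tendsto (fun t => ‖x t - 1‖) (𝓝[>] (0 : ℝ)) (𝓝 0)) :
    ∃! a : A,
      Tendsto (fun t : ℝ => ‖t⁻¹ • (x t - 1) - a‖) (𝓝[>] (0 : ℝ)) (𝓝 0) ∧
      ∀ t : ℝ, 0 ≤ t → x t = NormedSpace.exp (t • a) := by
  have hxC : ContinuousOn x (Ici 0) := sgContOn' x h0 hsg hcont
  have hInt : ∀ p q : ℝ, 0 ≤ p → 0 ≤ q → IntervalIntegrable x volume p q := by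
    intro p q hp hq
    apply (hxC.mono ?_).intervalIntegrable
    intro s hs
    exact le_trans (le_min hp hq) (by simpa [uIcc] using hs.1)
  obtain ⟨δ, hδ, hsm⟩ := sgSmall' x hcont (by norm_num : (0:ℝ) < 1/2)
  set y : A := ∫ s in (0:ℝ)..δ, x s with hy
  -- invertibility of δ⁻¹ • y
  have hnorm : ‖1 - δ⁻¹ • y‖ < 1 := by
    have h2 : (1:A) - δ⁻¹ • y = δ⁻¹ • (∫ s in (0:ℝ)..δ, ((1:A) - x s)) := by
      rw [integral_sub intervalIntegrable_const (hInt 0 δ le_rfl hδ.le)]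
      rw [intervalIntegral.integral_const, smul_sub, smul_smul, sub_zero,
        inv_mul_cancel₀ hδ.ne', one_smul, ← hy]
    rw [h2, norm_smul]
    have hb : ‖∫ s in (0:ℝ)..δ, ((1:A) - x s)‖ ≤ (1/2) * |δ - 0| := by
      apply intervalIntegral.norm_integral_le_of_norm_le_const
      intro s hs
      rw [uIoc_of_le hδ.le] at hs
      rw [norm_sub_rev]
      exact (hsm s hs).le
    have : ‖δ⁻¹‖ = δ⁻¹ := by
      rw [Real.norm_eq_abs, abs_of_pos (by positivity)]
    rw [this]
    calc δ⁻¹ * ‖∫ s in (0:ℝ)..δ, ((1:A) - x s)‖ ≤ δ⁻¹ * ((1/2) * |δ - 0|) := by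
          apply mul_le_mul_of_nonneg_left hb (by positivity)
      _ = 1/2 := by
          rw [sub_zero, abs_of_pos hδ]; field_simp
      _ < 1 := by norm_num
  set w : Aˣ := Units.oneSub (1 - δ⁻¹ • y) hnorm with hw
  have hwval : (w : A) = δ⁻¹ • y := by
    simp [hw, Units.oneSub]
  set B : A := δ⁻¹ • (↑w⁻¹ : A) with hB
  have hyB : y * B = 1 := by
    rw [hB, mul_smul_comm, ← smul_mul_assoc, ← hwval, w.mul_inv]
  -- key identity
  have key : ∀ t : ℝ, 0 ≤ t → x t * y = ∫ s in t..(t+δ), x s := by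
    intro t ht
    have h1 : x t * y = ∫ s in (0:ℝ)..δ, x t * x s :=
      (ContinuousLinearMap.intervalIntegral_comp_comm
        ((ContinuousLinearMap.mul ℝ A) (x t)) (hInt 0 δ le_rfl hδ.le)).symm
    rw [h1]
    have h2 : ∀ s ∈ uIcc (0:ℝ) δ, x t * x s = x (t + s) := by
      intro s hs
      rw [uIcc_of_le hδ.le] at hs
      exact (hsg t s ht hs.1).symm
    rw [integral_congr h2]
    simpa using integral_comp_add_left (a := 0) (b := δ) x t
  have key2 : ∀ t : ℝ, 0 ≤ t →
      (x t - 1) * y = (∫ s in δ..(t+δ), x s) - ∫ s in (0:ℝ)..t, x s := by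
    intro t ht
    have e1 : (∫ s in (0:ℝ)..t, x s) + ∫ s in t..(t+δ), x s = ∫ s in (0:ℝ)..(t+δ), x s :=
      integral_add_adjacent_intervals (hInt 0 t le_rfl ht) (hInt t (t+δ) ht (by positivity))
    have e2 : (∫ s in (0:ℝ)..δ, x s) + ∫ s in δ..(t+δ), x s = ∫ s in (0:ℝ)..(t+δ), x s :=
      integral_add_adjacent_intervals (hInt 0 δ le_rfl hδ.le) (hInt δ (t+δ) hδ.le (by positivity))
    have h := e1.trans e2.symm
    rw [sub_mul, one_mul, key t ht, hy]
    rw [sub_eq_sub_iff_add_eq_add, add_comm _ (∫ s in (0:ℝ)..t, x s), h, add_comm]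
  -- derivative of the RHS at 0
  have hmeas : ∀ c : ℝ, 0 ≤ c → StronglyMeasurableAtFilter x (𝓝[>] c) volume :=
    fun c hc => ⟨Ici 0, mem_of_superset self_mem_nhdsWithin
      (fun s hs => le_trans hc (le_of_lt hs)),
      hxC.aestronglyMeasurable measurableSet_Ici⟩
  have hG : HasDerivWithinAt (fun u => ∫ s in δ..u, x s) (x δ) (Ici δ) δ :=
    integral_hasDerivWithinAt_right (hInt δ δ hδ.le hδ.le) (hmeas δ hδ.le)
      ((hxC δ hδ.le).mono (fun s hs => le_trans hδ.le (le_of_lt hs)))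
  have hshift : HasDerivWithinAt (fun t : ℝ => t + δ) 1 (Ici 0) 0 :=
    ((hasDerivAt_id (0:ℝ)).add_const δ).hasDerivWithinAt
  have hG2 : HasDerivWithinAt (fun t : ℝ => ∫ s in δ..(t+δ), x s) (x δ) (Ici 0) 0 := by
    have := HasDerivWithinAt.scomp_of_eq 0 hG hshift
      (fun s hs => by simpa using add_le_add_right (mem_Ici.mp hs) δ) (by simp)
    simpa [Function.comp_def] using this
  have hH : HasDerivWithinAt (fun u => ∫ s in (0:ℝ)..u, x s) (x 0) (Ici 0) 0 :=
    integral_hasDerivWithinAt_right (hInt 0 0 le_rfl le_rfl) (hmeas 0 le_rfl)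
      ((hxC 0 (by simp)).mono (fun s hs => mem_Ici.mpr (le_of_lt hs)))
  have hF : HasDerivWithinAt (fun t => (∫ s in δ..(t+δ), x s) - ∫ s in (0:ℝ)..t, x s)
      (x δ - x 0) (Ici 0) 0 := hG2.sub hH
  set a : A := (x δ - 1) * B with ha
  -- derivative of x at 0 within Ici 0
  have hax : HasDerivWithinAt x a (Ici 0) 0 := by
    have hFa : HasDerivWithinAt
        (fun t => ((∫ s in δ..(t+δ), x s) - ∫ s in (0:ℝ)..t, x s) * B)
        ((x δ - x 0) * B) (Ici 0) 0 := hF.mul_const B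
    have heq : ∀ t ∈ Ici (0:ℝ), x t - 1 =
        ((∫ s in δ..(t+δ), x s) - ∫ s in (0:ℝ)..t, x s) * B := by
      intro t ht
      rw [← key2 t ht, mul_assoc, hyB, mul_one]
    have ha' : HasDerivWithinAt (fun t => x t - 1) ((x δ - x 0) * B) (Ici 0) 0 :=
      hFa.congr heq (heq 0 (by simp))
    have := ha'.add_const 1
    simp only [sub_add_cancel] at this
    rwa [h0, ← ha] at this
  -- tendsto condition
  have htend : Tendsto (fun t : ℝ => t⁻¹ • (x t - 1)) (𝓝[>] (0:ℝ)) (𝓝 a) := by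
    have h1 := hasDerivWithinAt_iff_tendsto_slope.mp hax
    rw [Ici_sdiff_left] at h1
    apply h1.congr
    intro t
    rw [slope_def_module, h0, sub_zero]
  -- right derivative everywhere
  have hder : ∀ t : ℝ, 0 ≤ t → HasDerivWithinAt x (x t * a) (Ici t) t := by
    intro t ht
    have hsh : HasDerivWithinAt (fun s : ℝ => s - t) 1 (Ici t) t :=
      ((hasDerivAt_id t).sub_const t).hasDerivWithinAt
    have h1 : HasDerivWithinAt (fun s => x (s - t)) a (Ici t) t := by
      have := HasDerivWithinAt.scomp_of_eq t hax hsh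
        (fun s hs => by simpa using mem_Ici.mp hs) (by simp)
      simpa [Function.comp_def] using this
    have h2 := h1.const_mul (x t)
    have heq : ∀ s ∈ Ici t, x s = x t * x (s - t) := by
      intro s hs
      have := hsg t (s - t) ht (by simpa using mem_Ici.mp hs)
      rw [← this]
      ring_nf
    exact (h2.congr heq (heq t (by simp))).congr_deriv rfl
  -- commutation
  have hcy : ∀ t : ℝ, 0 ≤ t → Commute (x t) y := by
    intro t ht
    have l1 : x t * y = ∫ s in (0:ℝ)..δ, x t * x s :=
      (ContinuousLinearMap.intervalIntegral_comp_comm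
        ((ContinuousLinearMap.mul ℝ A) (x t)) (hInt 0 δ le_rfl hδ.le)).symm
    have l2 : y * x t = ∫ s in (0:ℝ)..δ, x s * x t :=
      (ContinuousLinearMap.intervalIntegral_comp_comm
        ((ContinuousLinearMap.mul ℝ A).flip (x t)) (hInt 0 δ le_rfl hδ.le)).symm
    show x t * y = y * x t
    rw [l1, l2]
    apply integral_congr
    intro s hs
    rw [uIcc_of_le hδ.le] at hs
    show x t * x s = x s * x t
    rw [← hsg t s ht hs.1, ← hsg s t hs.1 ht, add_comm]
  have hca : ∀ t : ℝ, 0 ≤ t → Commute (x t) a := by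
    intro t ht
    have c1 : Commute (x t) (x δ) := by
      show x t * x δ = x δ * x t
      rw [← hsg t δ ht hδ.le, ← hsg δ t hδ.le ht, add_comm]
    have c2 : Commute (x t) B := by
      have cw : Commute (x t) (↑w : A) := by
        rw [hwval]; exact (hcy t ht).smul_right δ⁻¹
      exact (cw.units_inv_right).smul_right δ⁻¹
    exact (c1.sub_right (Commute.one_right _)).mul_right c2
  -- x t = exp (t • a)
  have hxexp : ∀ t : ℝ, 0 ≤ t → x t = NormedSpace.exp (t • a) := by
    intro t ht
    let +nondep : NormedAlgebra ℚ A := .restrictScalars ℚ ℝ A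
    have key3 : ∀ u ∈ Icc (0:ℝ) t,
        NormedSpace.exp (u • (-a)) * x u
          = NormedSpace.exp ((0:ℝ) • (-a)) * x 0 := by
      apply constant_of_has_deriv_right_zero
      · apply ContinuousOn.mul
        · exact ((NormedSpace.exp_continuous.comp
            (continuous_id.smul continuous_const))).continuousOn
        · exact hxC.mono (fun s hs => hs.1)
      · intro u hu
        have hu0 : 0 ≤ u := hu.1
        have hd1 : HasDerivWithinAt (fun s : ℝ => NormedSpace.exp (s • (-a)))
            (NormedSpace.exp (u • (-a)) * (-a)) (Ici u) u :=
          (hasDerivAt_exp_smul_const (-a) u).hasDerivWithinAt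
        have hd := hd1.mul (hder u hu0)
        have hzero : NormedSpace.exp (u • (-a)) * (-a) * x u
            + NormedSpace.exp (u • (-a)) * (x u * a) = 0 := by
          have hc : a * x u = x u * a := ((hca u hu0).symm).eq
          rw [mul_assoc, neg_mul, hc, mul_neg, neg_add_cancel]
        rwa [hzero] at hd
    have h1 := key3 t ⟨ht, le_refl t⟩
    rw [h0, zero_smul, NormedSpace.exp_zero, mul_one] at h1
    have h2 : NormedSpace.exp (t • a) * NormedSpace.exp (t • (-a)) = 1 := by
      have hcm : Commute (t • a) (t • (-a)) :=
        (((Commute.refl a).neg_right).smul_left t).smul_right t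
      rw [← NormedSpace.exp_add_of_commute hcm, smul_neg, add_neg_cancel,
        NormedSpace.exp_zero]
    rw [← one_mul (x t), ← h2, mul_assoc, h1, mul_one]
  refine ⟨a, ⟨tendsto_iff_norm_sub_tendsto_zero.mp htend, hxexp⟩, ?_⟩
  rintro b ⟨hb, -⟩
  have hb' : Tendsto (fun t : ℝ => t⁻¹ • (x t - 1)) (𝓝[>] (0:ℝ)) (𝓝 b) :=
    tendsto_iff_norm_sub_tendsto_zero.mpr hb
  exact tendsto_nhds_unique hb' htend
end

section
/- Let B be a C*-bialgebra and (P_t)_{t≥0} a semigroup of bounded maps on M(B) with P_t|_B satisfying the commutativity property L_μ P_t = P_t L_μ for all μ ∈ B* and t ≥ 0, where L_μ = (μ ⊗ id)Δ. Then (P_t) satisfies the weak invariance condition P_t = (id ⊗ (ε ∘ P_t))Δ for all t ≥ 0. -/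
open Filter Topology

/-- Let `(P_t)` be a semigroup of bounded maps on `M(B) = Mb`
(for a C*-bialgebra `B` with embedding `j : B → M(B)`, counit `ε`, strict
extension map `ext : B* → M(B)*`, slice maps `L μ = (μ ⊗ id)Δ`,
`R μ = (id ⊗ μ)Δ : B → M(B)`, and strict extensions `Lt μ = L̃_μ` on `M(B)`).
If the restrictions `P_t|_B` commute with all the maps `L_μ`
(`L_μ P_t = P_t L_μ`), then `(P_t)` satisfies the weak invariance condition
`P_t|_B = (id ⊗ (ε ∘ P_t))Δ = R (ε̃ ∘ P_t ∘ j)`. -/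
theorem commutation_implies_weak_invariance
    {B Mb : Type*}
    [NonUnitalNormedRing B] [StarRing B] [CStarRing B]
    [NormedSpace ℂ B] [CompleteSpace B]
    [NormedRing Mb] [StarRing Mb] [CStarRing Mb]
    [NormedAlgebra ℂ Mb] [CompleteSpace Mb]
    (j : B →L[ℂ] Mb)
    (hj_mul : ∀ a b : B, j (a * b) = j a * j b)
    (hj_star : ∀ a : B, j (star a) = star (j a))
    (ε : B →L[ℂ] ℂ)
    -- strict extension of functionals; strict functionals separate `M(B)`
    (ext : (B →L[ℂ] ℂ) → (Mb →L[ℂ] ℂ))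
    (hext_j : ∀ μ, (ext μ).comp j = μ)
    (hsep : ∀ m m' : Mb, (∀ μ : B →L[ℂ] ℂ, ext μ m = ext μ m') → m = m')
    -- the maps `L_μ`, `R_μ` and the strict extensions `L̃_μ`
    (L R : (B →L[ℂ] ℂ) → (B →L[ℂ] Mb))
    (Lt : (B →L[ℂ] ℂ) → (Mb →L[ℂ] Mb))
    (hLrest : ∀ μ, (Lt μ).comp j = L μ)
    -- slice calculus: `μ̃ ∘ R_θ = θ̃ ∘ L_μ` and `ε̃ ∘ L̃_μ = μ̃`
    (hA : ∀ μ θ : B →L[ℂ] ℂ, (ext μ).comp (R θ) = (ext θ).comp (L μ))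
    (hB : ∀ μ : B →L[ℂ] ℂ, (ext ε).comp (Lt μ) = ext μ)
    -- the strict semigroup on `M(B)`
    (P : ℝ → (Mb →L[ℂ] Mb))
    (hP0 : P 0 = ContinuousLinearMap.id ℂ Mb)
    (hPsg : ∀ s t : ℝ, 0 ≤ s → 0 ≤ t → P (s + t) = (P s).comp (P t))
    -- strictness of the functionals `ε ∘ P_t`: their strict extension is `ε̃ ∘ P̃_t`
    (hPext : ∀ t : ℝ, 0 ≤ t →
      ext (((ext ε).comp (P t)).comp j) = (ext ε).comp (P t))
    -- the commutation assumption `L_μ P_t = P_t L_μ`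
    (hcomm : ∀ (μ : B →L[ℂ] ℂ) (t : ℝ), 0 ≤ t →
      (Lt μ).comp (P t) = (P t).comp (Lt μ)) :
    ∀ t : ℝ, 0 ≤ t → (P t).comp j = R (((ext ε).comp (P t)).comp j) := by
  intro t ht
  ext b
  apply hsep
  intro μ
  have h1 : ext μ (R (((ext ε).comp (P t)).comp j) b)
      = ext (((ext ε).comp (P t)).comp j) (L μ b) :=
    congrArg (fun f => f b) (hA μ (((ext ε).comp (P t)).comp j))
  have h2 : L μ b = Lt μ (j b) := (congrArg (fun f => f b) (hLrest μ)).symm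
  have h3 : Lt μ (P t (j b)) = P t (Lt μ (j b)) :=
    congrArg (fun f => f (j b)) (hcomm μ t ht)
  have h4 : ext ε (Lt μ (P t (j b))) = ext μ (P t (j b)) :=
    congrArg (fun f => f (P t (j b))) (hB μ)
  simp only [ContinuousLinearMap.comp_apply] at *
  rw [h1, hPext t ht]
  simp only [ContinuousLinearMap.comp_apply, h2, ← h3, h4]
end

section
/- Let B be a C*-bialgebra satisfying the residual vanishing at infinity condition: (B ⊗ 1)Δ(B) ⊆ B ⊗ B and (1 ⊗ B)Δ(B) ⊆ B ⊗ B. Assume every μ ∈ B* factorizes as μ = λ·c (i.e. μ(a) = λ(ca)) for some λ ∈ B* and c ∈ B. Then for every μ ∈ B*, the maps L_μ = (μ ⊗ id)Δ and R_μ = (id ⊗ μ)Δ map B into B (not merely into M(B)). -/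
open Filter Topology

/-- Let `B` be a C*-bialgebra satisfying the residual
vanishing at infinity condition: `(B ⊗ 1)Δ(B) ⊆ B ⊗ B` and
`(1 ⊗ B)Δ(B) ⊆ B ⊗ B` (here `T₂` models `B ⊗ B`, `C₂` models `M(B ⊗ B)` with
`k : T₂ → C₂` the canonical embedding and `lft b = b ⊗ 1`, `rgt b = 1 ⊗ b`).
Assuming the Cohen–Hewitt factorisation `μ = λ·c` of functionals, the maps
`L_μ = (μ ⊗ id)Δ` and `R_μ = (id ⊗ μ)Δ` map `B` into `B` (i.e. into the range
of the embedding `jB : B → M(B)`), not merely into `M(B)`. -/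
theorem residual_vanishing_L_R_preserve_B
    {B Mb T₂ C₂ : Type*}
    [NonUnitalNormedRing B] [StarRing B] [CStarRing B]
    [NormedSpace ℂ B] [CompleteSpace B]
    [NormedAddCommGroup Mb] [NormedSpace ℂ Mb]
    [NormedAddCommGroup T₂] [NormedSpace ℂ T₂]
    [NormedRing C₂] [NormedAlgebra ℂ C₂] [CompleteSpace C₂]
    (jB : B →L[ℂ] Mb)
    (k : T₂ →L[ℂ] C₂)
    (Δ : B →L[ℂ] C₂)
    (lft rgt : B →L[ℂ] C₂)   -- `b ↦ b ⊗ 1` and `b ↦ 1 ⊗ b`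
    -- residual vanishing at infinity
    (hrv1 : ∀ b a : B, ∃ x : T₂, lft b * Δ a = k x)
    (hrv2 : ∀ b a : B, ∃ x : T₂, rgt b * Δ a = k x)
    -- slice maps on `M(B ⊗ B)` and on `B ⊗ B` (left: `μ ⊗ id`, right: `id ⊗ μ`)
    (sliceL sliceR : (B →L[ℂ] ℂ) → (C₂ →L[ℂ] Mb))
    (sliceLt sliceRt : (B →L[ℂ] ℂ) → (T₂ →L[ℂ] B))
    (hLk : ∀ μ x, sliceL μ (k x) = jB (sliceLt μ x))
    (hRk : ∀ μ x, sliceR μ (k x) = jB (sliceRt μ x))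
    -- Cohen–Hewitt factorisation of functionals: `μ = λ·c`
    (hfactL : ∀ μ : B →L[ℂ] ℂ, ∃ (lam : B →L[ℂ] ℂ) (c : B), ∀ a, μ a = lam (c * a))
    (hfactR : ∀ μ : B →L[ℂ] ℂ, ∃ (lam : B →L[ℂ] ℂ) (c : B), ∀ a, μ a = lam (c * a))
    -- module property of slice maps: `(λ·c ⊗ id)(y) = (λ ⊗ id)((c ⊗ 1) y)` etc.
    (hmodL : ∀ (lam : B →L[ℂ] ℂ) (c : B) (μ : B →L[ℂ] ℂ),
      (∀ a, μ a = lam (c * a)) → ∀ y : C₂, sliceL μ y = sliceL lam (lft c * y))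
    (hmodR : ∀ (lam : B →L[ℂ] ℂ) (c : B) (μ : B →L[ℂ] ℂ),
      (∀ a, μ a = lam (c * a)) → ∀ y : C₂, sliceR μ y = sliceR lam (rgt c * y)) :
    ∀ μ : B →L[ℂ] ℂ,
      (∀ a : B, ∃ b : B, sliceL μ (Δ a) = jB b) ∧
      (∀ a : B, ∃ b : B, sliceR μ (Δ a) = jB b) := by
  intro μ
  constructor
  · intro a
    obtain ⟨lam, c, hc⟩ := hfactL μ
    obtain ⟨x, hx⟩ := hrv1 c a
    exact ⟨sliceLt lam x, by rw [hmodL lam c μ hc, hx, hLk]⟩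
  · intro a
    obtain ⟨lam, c, hc⟩ := hfactR μ
    obtain ⟨x, hx⟩ := hrv2 c a
    exact ⟨sliceRt lam x, by rw [hmodR lam c μ hc, hx, hRk]⟩
end

section
/- Let B be a C*-bialgebra with residual vanishing at infinity, and let (λ_t)_{t≥0} be a convolution semigroup of functionals with associated semigroup P_t = R_{λ_t} : B → B. Then (λ_t) is weakly continuous (λ_t(a) → ε(a) for all a ∈ B as t → 0⁺) if and only if (P_t) is a C₀-semigroup on B (i.e. ‖P_t(a) − a‖ → 0 for all a ∈ B as t → 0⁺). -/
open Filter Topology MeasureTheory Set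

namespace FellerProof

variable {X : Type*} [NormedAddCommGroup X] [NormedSpace ℂ X]

/-- Weak limits stay in closed convex sets (Mazur / Hahn–Banach separation). -/
lemma mem_of_weak_tendsto {C : Set X} (hC : Convex ℝ C) (hCc : IsClosed C)
    {ι : Type*} {l : Filter ι} [l.NeBot] {u : ι → X} (hu : ∀ i, u i ∈ C) {v : X}
    (h : ∀ μ : X →L[ℂ] ℂ, Tendsto (fun i => μ (u i)) l (𝓝 (μ v))) : v ∈ C := by
  by_contra hv
  obtain ⟨f, c, hfC, hcv⟩ := geometric_hahn_banach_closed_point hC hCc hv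
  set μ : X →L[ℂ] ℂ := f.extendTo𝕜'
  have hre : ∀ w : X, RCLike.re (μ w) = f w := fun w =>
    f.toLinearMap.extendTo𝕜'_apply_re (𝕜 := ℂ) w
  have h1 : Tendsto (fun i => RCLike.re (μ (u i))) l (𝓝 (RCLike.re (μ v))) :=
    ((RCLike.continuous_re).tendsto _).comp (h μ)
  have h2 : ∀ i, RCLike.re (μ (u i)) < c := fun i => by rw [hre]; exact hfC _ (hu i)
  have h3 := le_of_tendsto h1 (Eventually.of_forall fun i => (h2 i).le)
  rw [hre] at h3
  exact absurd (hcv.trans_le h3) (lt_irrefl _)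

/-- A norming sequence of functionals computes the norm on the closure of the range. -/
lemma norm_eq_iSup_of_norming {e : ℕ → X} {μ : ℕ → X →L[ℂ] ℂ}
    (hμ1 : ∀ m, ‖μ m‖ ≤ 1) (hμe : ∀ m, μ m (e m) = (‖e m‖ : ℂ))
    {w : X} (hw : w ∈ closure (Set.range e)) :
    ‖w‖ = ⨆ m, ‖μ m (w)‖ := by
  have hle : ∀ m, ‖μ m w‖ ≤ ‖w‖ := fun m =>
    ((μ m).le_opNorm w).trans (by nlinarith [norm_nonneg w, hμ1 m])
  have hbdd : BddAbove (Set.range fun m => ‖μ m w‖) :=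
    ⟨‖w‖, by rintro - ⟨m, rfl⟩; exact hle m⟩
  refine le_antisymm ?_ (ciSup_le hle)
  refine le_of_forall_pos_le_add fun ε hε => ?_
  obtain ⟨y, hy_mem, hy⟩ : ∃ y ∈ Set.range e, dist w y < ε / 3 :=
    Metric.mem_closure_iff.1 hw (ε / 3) (by positivity)
  obtain ⟨m, rfl⟩ := hy_mem
  rw [dist_eq_norm] at hy
  have h2 : ‖μ m (e m)‖ = ‖e m‖ := by
    rw [hμe m]
    simp [Complex.norm_real, Real.norm_eq_abs, abs_of_nonneg (norm_nonneg (e m))]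
  have h3 : ‖μ m (e m)‖ ≤ ‖μ m w‖ + ‖μ m (e m - w)‖ := by
    calc ‖μ m (e m)‖ = ‖μ m w + μ m (e m - w)‖ := by
          rw [← map_add, show w + (e m - w) = e m by abel]
      _ ≤ ‖μ m w‖ + ‖μ m (e m - w)‖ := norm_add_le _ _
  have h4 : ‖μ m (e m - w)‖ ≤ ‖e m - w‖ :=
    ((μ m).le_opNorm _).trans (by nlinarith [norm_nonneg (e m - w), hμ1 m])
  have h5 : ‖e m - w‖ = ‖w - e m‖ := norm_sub_rev _ _
  have h6 : ‖w‖ ≤ ‖e m‖ + ‖w - e m‖ := norm_le_norm_add_norm_sub' w (e m)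
  have h7 : ‖μ m w‖ ≤ ⨆ k, ‖μ k w‖ := le_ciSup hbdd m
  linarith


variable {X : Type*} [NormedAddCommGroup X] [NormedSpace ℂ X]

theorem strong_continuity [CompleteSpace X] (T : ℝ → X →L[ℂ] X)
    (hT0 : T 0 = ContinuousLinearMap.id ℂ X)
    (hsg : ∀ s t : ℝ, 0 ≤ s → 0 ≤ t → T (s + t) = (T s).comp (T t))
    (hw : ∀ (μ : X →L[ℂ] ℂ) (a : X), Tendsto (fun t => μ (T t a)) (𝓝[>] (0:ℝ)) (𝓝 (μ a)))
    (x : X) : Tendsto (fun t => T t x) (𝓝[>] (0:ℝ)) (𝓝 x) := by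
  classical
  letI : MeasurableSpace X := borel X
  haveI : BorelSpace X := ⟨rfl⟩
  -- ## Step 1: local boundedness of the semigroup near 0
  have hbdd : ∃ δ : ℝ, 0 < δ ∧ ∃ M : ℝ, 1 ≤ M ∧ ∀ t : ℝ, 0 < t → t ≤ δ → ‖T t‖ ≤ M := by
    by_contra hcon
    push_neg at hcon
    have H : ∀ n : ℕ, ∃ t : ℝ, 0 < t ∧ t ≤ 1/(n+1) ∧ (n:ℝ) < ‖T t‖ := by
      intro n
      obtain ⟨t, ht1, ht2, ht3⟩ := hcon (1/(n+1)) (by positivity) (max 1 n) (le_max_left _ _)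
      exact ⟨t, ht1, ht2, lt_of_le_of_lt (by exact_mod_cast le_max_right 1 (n:ℝ)) ht3⟩
    choose t ht0 ht1 ht2 using H
    have htend : Tendsto t atTop (𝓝[>] (0:ℝ)) := by
      rw [tendsto_nhdsWithin_iff]
      refine ⟨?_, Eventually.of_forall fun n => ht0 n⟩
      exact squeeze_zero (fun n => (ht0 n).le) ht1 tendsto_one_div_add_atTop_nhds_zero_nat
    have hpt : ∀ a : X, ∃ C, ∀ n, ‖T (t n) a‖ ≤ C := by
      intro a
      have h1 : ∀ μ : StrongDual ℂ X, ∃ C, ∀ n,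
          ‖(NormedSpace.inclusionInDoubleDualLi ℂ (E := X) (T (t n) a)) μ‖ ≤ C := by
        intro μ
        have hconv : Tendsto (fun n => μ (T (t n) a)) atTop (𝓝 (μ a)) := (hw μ a).comp htend
        obtain ⟨C, hC⟩ := hconv.norm.bddAbove_range
        refine ⟨C, fun n => ?_⟩
        have : ‖μ (T (t n) a)‖ ≤ C := hC ⟨n, rfl⟩
        simpa [NormedSpace.inclusionInDoubleDualLi] using this
      obtain ⟨C, hC⟩ := banach_steinhaus h1
      refine ⟨C, fun n => ?_⟩
      have := hC n
      rwa [(NormedSpace.inclusionInDoubleDualLi ℂ (E := X)).norm_map] at this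
    obtain ⟨C', hC'⟩ := banach_steinhaus hpt
    obtain ⟨n, hn⟩ := exists_nat_gt C'
    exact absurd ((ht2 n).trans_le (hC' n)) (not_lt.2 hn.le)
  obtain ⟨δ, hδ, M, hM1, hMb⟩ := hbdd
  have hMb' : ∀ t : ℝ, 0 ≤ t → t ≤ δ → ‖T t‖ ≤ M := by
    intro t ht0 htδ
    rcases eq_or_lt_of_le ht0 with h|h
    · rw [← h, hT0]
      exact le_trans (ContinuousLinearMap.norm_id_le) hM1
    · exact hMb t h htδ
  -- ## Step 2: weak right-continuity of the orbit maps
  have hrc : ∀ (μ : X →L[ℂ] ℂ) (a : X) (s : ℝ), 0 ≤ s →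
      Tendsto (fun r => μ (T r a)) (𝓝[>] s) (𝓝 (μ (T s a))) := by
    intro μ a s hs
    have hshift : Tendsto (fun r : ℝ => r - s) (𝓝[>] s) (𝓝[>] (0:ℝ)) := by
      apply tendsto_nhdsWithin_of_tendsto_nhds_of_eventually_within
      · have : Tendsto (fun r : ℝ => r - s) (𝓝 s) (𝓝 (s - s)) :=
          ((continuous_id.sub continuous_const).tendsto s)
        rw [sub_self] at this
        exact this.mono_left nhdsWithin_le_nhds
      · filter_upwards [self_mem_nhdsWithin] with r hr
        exact sub_pos.2 (Set.mem_Ioi.1 hr)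
    have h1 : Tendsto (fun r => (μ.comp (T s)) (T (r - s) a)) (𝓝[>] s)
        (𝓝 ((μ.comp (T s)) a)) := (hw (μ.comp (T s)) a).comp hshift
    refine h1.congr' ?_
    filter_upwards [self_mem_nhdsWithin] with r hr
    have h2 := hsg s (r - s) hs (by simp only [mem_Ioi] at hr; linarith)
    rw [add_sub_cancel] at h2
    rw [h2]
    rfl
  -- ## the orbit map of x, extended by the constant x to the left of 0
  set F : ℝ → X := fun s => T (max s 0) x with hFdef
  have hFnn : ∀ s : ℝ, 0 ≤ s → F s = T s x := fun s hs => by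
    simp only [hFdef, max_eq_left hs]
  have hF0 : F 0 = x := by
    rw [hFnn 0 le_rfl, hT0]; rfl
  have hFneg : ∀ s : ℝ, s ≤ 0 → F s = x := by
    intro s hs
    show T (max s 0) x = x
    rw [max_eq_right hs, hT0]; rfl
  have hFbd : ∀ s : ℝ, s ≤ δ → ‖F s‖ ≤ M * ‖x‖ := by
    intro s hs
    refine le_trans ((T (max s 0)).le_opNorm x) ?_
    have : ‖T (max s 0)‖ ≤ M := hMb' _ (le_max_right _ _) (max_le hs hδ.le)
    exact mul_le_mul_of_nonneg_right this (norm_nonneg x)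
  -- ## Step 3: scalar right-continuity of the orbit within `Ici`
  have hFrc : ∀ (μ : X →L[ℂ] ℂ) (s : ℝ), Tendsto (fun r => μ (F r)) (𝓝[≥] s) (𝓝 (μ (F s))) := by
    intro μ s
    rcases lt_or_ge s 0 with hs | hs
    · have hev : ∀ᶠ r in 𝓝[≥] s, μ (F s) = μ (F r) := by
        have : Set.Iio (0:ℝ) ∈ 𝓝[≥] s := nhdsWithin_le_nhds (Iio_mem_nhds hs)
        filter_upwards [this] with r hr
        rw [hFneg r (Set.mem_Iio.1 hr).le, hFneg s hs.le]
      exact Tendsto.congr' hev tendsto_const_nhds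
    · have hIci : 𝓝[Set.Ici s] s = pure s ⊔ 𝓝[Set.Ioi s] s := by
        rw [← Set.Ioi_insert, nhdsWithin_insert]
      rw [hIci, tendsto_sup]
      constructor
      · exact tendsto_pure_nhds _ _
      · have h1 : Tendsto (fun r => μ (T r x)) (𝓝[>] s) (𝓝 (μ (T s x))) := hrc μ x s hs
        have h2 : ∀ᶠ r in 𝓝[>] s, μ (T r x) = μ (F r) := by
          filter_upwards [self_mem_nhdsWithin] with r hr
          rw [hFnn r (le_of_lt (lt_of_le_of_lt hs hr))]
        rw [show μ (F s) = μ (T s x) by rw [hFnn s hs]]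
        exact h1.congr' h2
  -- dyadic upper approximations of a real number
  have hq_tendsto : ∀ s : ℝ,
      Tendsto (fun n : ℕ => ((⌈s * 2^n⌉ : ℤ) : ℝ) / 2^n) atTop (𝓝[≥] s) := by
    intro s
    apply tendsto_nhdsWithin_of_tendsto_nhds_of_eventually_within
    · have hle : ∀ n : ℕ, ((⌈s * 2^n⌉ : ℤ) : ℝ) / 2^n ≤ s + (2^n)⁻¹ := by
        intro n
        rw [div_le_iff₀ (by positivity)]
        have := (Int.ceil_lt_add_one (s * 2^n)).le
        calc ((⌈s * 2^n⌉ : ℤ) : ℝ) ≤ s * 2^n + 1 := this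
          _ = (s + (2^n)⁻¹) * 2^n := by field_simp
      have hge : ∀ n : ℕ, s ≤ ((⌈s * 2^n⌉ : ℤ) : ℝ) / 2^n := by
        intro n
        rw [le_div_iff₀ (by positivity)]
        exact Int.le_ceil _
      have hupper : Tendsto (fun n : ℕ => s + ((2:ℝ)^n)⁻¹) atTop (𝓝 (s + 0)) := by
        apply Tendsto.const_add
        exact tendsto_inv_atTop_zero.comp (tendsto_pow_atTop_atTop_of_one_lt one_lt_two)
      rw [add_zero] at hupper
      exact tendsto_of_tendsto_of_tendsto_of_le_of_le tendsto_const_nhds hupper hge hle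
    · refine Eventually.of_forall fun n => ?_
      rw [Set.mem_Ici, le_div_iff₀ (by positivity)]
      exact Int.le_ceil _
  -- ## Step 4: scalar measurability of the orbit
  have hFm : ∀ μ : X →L[ℂ] ℂ, Measurable fun s => μ (F s) := by
    intro μ
    have hgn : ∀ n : ℕ, Measurable fun s : ℝ => μ (F (((⌈s * 2^n⌉ : ℤ) : ℝ) / 2^n)) := by
      intro n
      exact (measurable_of_countable (fun k : ℤ => μ (F ((k:ℝ) / 2^n)))).comp
        (Int.measurable_ceil.comp (measurable_id.mul_const _))
    apply measurable_of_tendsto_metrizable hgn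
    rw [tendsto_pi_nhds]
    intro s
    exact (hFrc μ s).comp (hq_tendsto s)
  -- ## Step 5: the orbit lies in a separable closed subspace
  set S : Set X := Set.range (fun q : ℚ => F q) with hSdef
  set X₀ : Submodule ℂ X := (Submodule.span ℂ S).topologicalClosure with hX₀def
  have hX₀closed : IsClosed (X₀ : Set X) := Submodule.isClosed_topologicalClosure _
  have hX₀conv : Convex ℝ (X₀ : Set X) := by
    have := (X₀.restrictScalars ℝ).convex
    simpa using this
  have hX₀sep : TopologicalSpace.IsSeparable (X₀ : Set X) := by
    have h1 : TopologicalSpace.IsSeparable S := (Set.countable_range _).isSeparable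
    have h2 := h1.span (R := ℂ)
    have h3 := h2.closure
    rw [hX₀def]
    rw [Submodule.topologicalClosure_coe]
    exact h3
  have hFX₀ : ∀ s : ℝ, F s ∈ X₀ := by
    intro s
    apply mem_of_weak_tendsto hX₀conv hX₀closed
      (l := atTop) (u := fun n : ℕ => F (((⌈s * 2^n⌉ : ℤ) : ℝ) / 2^n))
    · intro n
      have hrat : (((⌈s * 2^n⌉ : ℤ) : ℝ) / 2^n) = (((⌈s * 2^n⌉ / 2^n : ℚ)) : ℝ) := by
        push_cast; ring
      rw [hrat]
      exact Submodule.le_topologicalClosure _ (Submodule.subset_span ⟨_, rfl⟩)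
    · intro ν
      exact (hFrc ν s).comp (hq_tendsto s)
  -- a dense sequence in the subspace
  obtain ⟨c, hc_count, hc_sub⟩ := id hX₀sep
  have hx_cl : ∀ s : ℝ, F s ∈ closure c := fun s => hc_sub (hFX₀ s)
  have hc_ne : c.Nonempty := by
    by_contra hne
    rw [Set.not_nonempty_iff_eq_empty] at hne
    have := hx_cl 0
    rw [hne, closure_empty] at this
    exact this
  obtain ⟨v, hv⟩ := hc_count.exists_eq_range hc_ne
  have hx_clv : ∀ s : ℝ, F s ∈ closure (Set.range v) := by rw [← hv]; exact hx_cl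
  -- measurability of the distance functions s ↦ ‖F s - v j‖
  have hdist_meas : ∀ j : ℕ, Measurable fun s => ‖F s - v j‖ := by
    intro j
    set e : ℕ → X := fun m => v m - v j with hedef
    have hcl : ∀ s : ℝ, F s - v j ∈ closure (Set.range e) := by
      intro s
      have h1 : F s - v j ∈ (fun y => y - v j) '' closure (Set.range v) :=
        ⟨F s, hx_clv s, rfl⟩
      have h2 := image_closure_subset_closure_image
        (f := fun y => y - v j) (s := Set.range v) (continuous_id.sub continuous_const)
      have h3 : (fun y => y - v j) '' Set.range v = Set.range e :=
        (Set.range_comp (fun y => y - v j) v).symm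
      exact h3 ▸ h2 h1
    choose μs hμs1 hμs2 using fun m => exists_dual_vector'' ℂ (e m)
    have key : ∀ s, ‖F s - v j‖ = ⨆ m, ‖μs m (F s - v j)‖ := by
      intro s
      exact norm_eq_iSup_of_norming hμs1 hμs2 (hcl s)
    simp_rw [key]
    apply Measurable.iSup
    intro m
    have h1 : Measurable fun s => μs m (F s) := hFm (μs m)
    have h2 : (fun s => μs m (F s - v j)) = fun s => μs m (F s) - μs m (v j) := by
      funext s; rw [map_sub]
    rw [show (fun s => ‖μs m (F s - v j)‖) = fun s => ‖μs m (F s) - μs m (v j)‖ by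
      funext s; rw [map_sub]]
    exact (h1.sub measurable_const).norm
  -- strong measurability of the orbit
  have hFmeas : Measurable F := by
    have hex : ∀ n : ℕ, ∀ s : ℝ, ∃ j, ‖F s - v j‖ < 1/(n+1) := by
      intro n s
      obtain ⟨y, hy_mem, hy⟩ := Metric.mem_closure_iff.1 (hx_clv s) (1/(n+1)) (by positivity)
      obtain ⟨j, rfl⟩ := hy_mem
      exact ⟨j, by rwa [dist_eq_norm] at hy⟩
    have hGmeas : ∀ n : ℕ, Measurable fun s => v (Nat.find (hex n s)) := by
      intro n
      apply (measurable_from_nat (f := v)).comp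
      apply measurable_find
      intro j
      exact measurableSet_lt (hdist_meas j) measurable_const
    apply measurable_of_tendsto_metrizable hGmeas
    rw [tendsto_pi_nhds]
    intro s
    rw [tendsto_iff_dist_tendsto_zero]
    apply squeeze_zero (fun n => dist_nonneg)
      (g := fun n : ℕ => 1/(n+1))
    · intro n
      rw [dist_comm, dist_eq_norm]
      exact (Nat.find_spec (hex n s)).le
    · exact tendsto_one_div_add_atTop_nhds_zero_nat
  have hFsm : StronglyMeasurable F :=
    stronglyMeasurable_iff_measurable_separable.2
      ⟨hFmeas, hX₀sep.mono (Set.range_subset_iff.2 hFX₀)⟩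
  -- ## Step 6: integrability
  have hFint : ∀ a b : ℝ, a ≤ δ → b ≤ δ → IntervalIntegrable F volume a b := by
    intro a b ha hb
    rw [intervalIntegrable_iff]
    apply Integrable.mono' (g := fun _ => M * ‖x‖)
    · exact integrableOn_const measure_Ioc_lt_top.ne
    · exact hFsm.aestronglyMeasurable.restrict
    · refine (ae_restrict_iff' measurableSet_uIoc).2 (Eventually.of_forall fun s hs => ?_)
      refine hFbd s ?_
      rcases Set.mem_uIoc.1 hs with h | h
      · exact h.2.trans hb
      · exact h.2.trans ha
  have hμFint : ∀ (μ : X →L[ℂ] ℂ) (a b : ℝ), a ≤ δ → b ≤ δ →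
      IntervalIntegrable (fun s => μ (F s)) volume a b := by
    intro μ a b ha hb
    rw [intervalIntegrable_iff]
    apply Integrable.mono' (g := fun _ => ‖μ‖ * (M * ‖x‖))
    · exact integrableOn_const measure_Ioc_lt_top.ne
    · exact ((hFm μ).stronglyMeasurable).aestronglyMeasurable.restrict
    · refine (ae_restrict_iff' measurableSet_uIoc).2 (Eventually.of_forall fun s hs => ?_)
      refine le_trans (μ.le_opNorm _) ?_
      apply mul_le_mul_of_nonneg_left _ (norm_nonneg μ)
      refine hFbd s ?_
      rcases Set.mem_uIoc.1 hs with h | h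
      · exact h.2.trans hb
      · exact h.2.trans ha
  -- ## Step 7: the averaged vectors
  set δ' : ℝ := δ/2 with hδ'def
  have hδ'pos : 0 < δ' := by positivity
  have hδ'δ : δ' ≤ δ := by rw [hδ'def]; linarith
  set y : ℝ → X := fun r => ∫ s in (0:ℝ)..r, F s with hydef
  have hTy : ∀ h : ℝ, 0 < h → h ≤ δ' → ∀ r : ℝ, 0 < r → r ≤ δ' →
      ‖T h (y r) - y r‖ ≤ 2*(M*‖x‖)*h := by
    intro h h0 hhδ r r0 hrδ
    have hrh : r + h ≤ δ := by rw [hδ'def] at hhδ hrδ; linarith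
    have h1 : T h (y r) = ∫ s in (0:ℝ)..r, T h (F s) :=
      ((T h).intervalIntegral_comp_comm (hFint 0 r (by linarith) (by linarith))).symm
    have h2 : EqOn (fun s => T h (F s)) (fun s => F (s + h)) (Set.uIcc (0:ℝ) r) := by
      intro s hs
      rw [Set.uIcc_of_le r0.le] at hs
      have hs0 : 0 ≤ s := hs.1
      have h3 := hsg h s h0.le hs0
      simp only
      rw [hFnn s hs0, hFnn (s+h) (by linarith), show s + h = h + s by ring, h3]
      rfl
    have h3 : (∫ s in (0:ℝ)..r, T h (F s)) = ∫ s in (0:ℝ)..r, F (s + h) :=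
      intervalIntegral.integral_congr h2
    have h4 : (∫ s in (0:ℝ)..r, F (s + h)) = ∫ s in h..(r+h), F s := by
      have := intervalIntegral.integral_comp_add_right (a := (0:ℝ)) (b := r) F h
      rwa [zero_add] at this
    have I1 : IntervalIntegrable F volume 0 h := hFint _ _ (by linarith) (by linarith)
    have I2 : IntervalIntegrable F volume h r := hFint _ _ (by linarith) (by linarith)
    have I3 : IntervalIntegrable F volume r (r+h) := hFint _ _ (by linarith) (by linarith)
    have e1 : (∫ s in (0:ℝ)..h, F s) + (∫ s in h..r, F s) = ∫ s in (0:ℝ)..r, F s :=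
      intervalIntegral.integral_add_adjacent_intervals I1 I2
    have e2 : (∫ s in h..r, F s) + (∫ s in r..(r+h), F s) = ∫ s in h..(r+h), F s :=
      intervalIntegral.integral_add_adjacent_intervals I2 I3
    have h5 : T h (y r) - y r = (∫ s in r..(r+h), F s) - ∫ s in (0:ℝ)..h, F s := by
      rw [h1, h3, h4, hydef]
      simp only
      rw [← e2, ← e1]
      abel
    rw [h5]
    have n1 : ‖∫ s in r..(r+h), F s‖ ≤ (M*‖x‖) * |r + h - r| := by
      apply intervalIntegral.norm_integral_le_of_norm_le_const
      intro s hs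
      rcases Set.mem_uIoc.1 hs with hc | hc
      · exact hFbd s (hc.2.trans hrh)
      · exact hFbd s (hc.2.trans (by linarith))
    have n2 : ‖∫ s in (0:ℝ)..h, F s‖ ≤ (M*‖x‖) * |h - 0| := by
      apply intervalIntegral.norm_integral_le_of_norm_le_const
      intro s hs
      rcases Set.mem_uIoc.1 hs with hc | hc
      · exact hFbd s (hc.2.trans (by linarith))
      · exact hFbd s (hc.2.trans (by linarith))
    rw [show r + h - r = h by ring] at n1
    rw [sub_zero] at n2
    rw [abs_of_pos h0] at n1 n2
    calc ‖(∫ s in r..(r+h), F s) - ∫ s in (0:ℝ)..h, F s‖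
        ≤ ‖∫ s in r..(r+h), F s‖ + ‖∫ s in (0:ℝ)..h, F s‖ := norm_sub_le _ _
      _ ≤ (M*‖x‖) * h + (M*‖x‖) * h := add_le_add n1 n2
      _ = 2*(M*‖x‖)*h := by ring
  -- weak convergence of averages to x
  set Sav : Set X := (fun r => r⁻¹ • y r) '' (Set.Ioc 0 δ') with hSavdef
  set rr : ℕ → ℝ := fun n => δ' / (n+1) with hrrdef
  have hrr_pos : ∀ n : ℕ, 0 < rr n := fun n => by positivity
  have hrr_le : ∀ n : ℕ, rr n ≤ δ' := by
    intro n
    rw [hrrdef]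
    apply div_le_self hδ'pos.le
    simp only [le_add_iff_nonneg_left]
    exact_mod_cast Nat.zero_le n
  have hrr_tend : Tendsto rr atTop (𝓝 0) := by
    rw [hrrdef]
    simpa [div_eq_mul_inv] using
      (tendsto_one_div_add_atTop_nhds_zero_nat.const_mul δ')
  set u : ℕ → X := fun n => (rr n)⁻¹ • y (rr n) with hudef
  have hu_mem : ∀ n, u n ∈ Sav := fun n => ⟨rr n, ⟨hrr_pos n, hrr_le n⟩, rfl⟩
  have hu_weak : ∀ μ : X →L[ℂ] ℂ, Tendsto (fun n => μ (u n)) atTop (𝓝 (μ x)) := by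
    intro μ
    have hμy : ∀ r : ℝ, 0 < r → r ≤ δ' → μ (y r) = ∫ s in (0:ℝ)..r, μ (F s) := by
      intro r h1 h2
      exact (μ.intervalIntegral_comp_comm (hFint 0 r (by linarith) (by linarith))).symm
    rw [Metric.tendsto_atTop]
    intro ε hε
    obtain ⟨ρ, hρpos, hρ⟩ : ∃ ρ > 0, ∀ s : ℝ, 0 < s → s < ρ → ‖μ (F s) - μ x‖ ≤ ε/2 := by
      have h1 := hw μ x
      rw [Metric.tendsto_nhdsWithin_nhds] at h1
      obtain ⟨ρ, hρpos, H⟩ := h1 (ε/2) (by positivity)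
      refine ⟨ρ, hρpos, fun s hs1 hs2 => ?_⟩
      have h2 := H (Set.mem_Ioi.2 hs1) (by rw [Real.dist_eq, sub_zero, abs_of_pos hs1]; exact hs2)
      rw [dist_eq_norm] at h2
      rw [hFnn s hs1.le]
      exact h2.le
    obtain ⟨N, hN⟩ : ∃ N : ℕ, rr N < ρ :=
      (hrr_tend.eventually (eventually_lt_nhds hρpos)).exists
    refine ⟨N, fun n hn => ?_⟩
    have hrn : rr n < ρ := by
      have hmono : rr n ≤ rr N := by
        show δ' / (n+1) ≤ δ' / (N+1)
        gcongr
      linarith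
    have hrpos := hrr_pos n
    have hrle := hrr_le n
    have hint1 : IntervalIntegrable (fun s => μ (F s)) volume 0 (rr n) :=
      hμFint μ 0 (rr n) (by linarith) (by linarith)
    have heq : μ (u n) - μ x = (rr n)⁻¹ • (∫ s in (0:ℝ)..rr n, (μ (F s) - μ x)) := by
      rw [intervalIntegral.integral_sub hint1 intervalIntegrable_const,
        intervalIntegral.integral_const, hudef]
      simp only
      rw [μ.map_smul_of_tower]
      rw [hμy (rr n) hrpos hrle, sub_zero, smul_sub, smul_smul,
        inv_mul_cancel₀ (ne_of_gt hrpos), one_smul]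
    rw [dist_eq_norm, heq, norm_smul]
    have hb : ‖∫ s in (0:ℝ)..rr n, (μ (F s) - μ x)‖ ≤ (ε/2) * |rr n - 0| := by
      apply intervalIntegral.norm_integral_le_of_norm_le_const
      intro s hs
      rw [Set.uIoc_of_le hrpos.le] at hs
      exact hρ s hs.1 (lt_of_le_of_lt hs.2 hrn)
    rw [sub_zero, abs_of_pos hrpos] at hb
    rw [Real.norm_eq_abs, abs_of_pos (inv_pos.2 hrpos)]
    calc (rr n)⁻¹ * ‖∫ s in (0:ℝ)..rr n, (μ (F s) - μ x)‖
        ≤ (rr n)⁻¹ * ((ε/2) * rr n) := by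
          exact mul_le_mul_of_nonneg_left hb (inv_nonneg.2 hrpos.le)
      _ = ε/2 := by field_simp
      _ < ε := by linarith
  -- x lies in the closed convex hull of the averages
  have hx_mem_cl : x ∈ closure (convexHull ℝ Sav) := by
    apply mem_of_weak_tendsto (convex_convexHull ℝ Sav).closure isClosed_closure
      (l := atTop) (u := u)
    · exact fun n => subset_closure (subset_convexHull ℝ Sav (hu_mem n))
    · exact hu_weak
  -- ## Step 8: the 3ε argument
  rw [Metric.tendsto_nhdsWithin_nhds]
  intro ε hε
  have hM0 : (0:ℝ) < M := lt_of_lt_of_le one_pos hM1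
  set ε' : ℝ := ε / (4*(M+1)) with hε'def
  have hε'pos : 0 < ε' := by positivity
  obtain ⟨w, hw_mem, hw_close⟩ := Metric.mem_closure_iff.1 hx_mem_cl ε' hε'pos
  rw [dist_eq_norm] at hw_close
  rw [convexHull_eq] at hw_mem
  obtain ⟨ι', tf, wt, z, hwt0, hwt1, hz, hcm⟩ := hw_mem
  have hz' : ∀ i ∈ tf, ∃ r : ℝ, (0 < r ∧ r ≤ δ') ∧ r⁻¹ • y r = z i := by
    intro i hi
    obtain ⟨r, hr, hre⟩ := hz i hi
    exact ⟨r, ⟨hr.1, hr.2⟩, hre⟩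
  choose! rz hrz hrzeq using hz'
  set K : ℝ := ∑ i ∈ tf, wt i * ((rz i)⁻¹ * (2*(M*‖x‖))) with hKdef
  have hK0 : 0 ≤ K := Finset.sum_nonneg fun i hi =>
    mul_nonneg (hwt0 i hi) (mul_nonneg (inv_nonneg.2 (hrz i hi).1.le) (by positivity))
  have hTw : ∀ h : ℝ, 0 < h → h ≤ δ' → ‖T h w - w‖ ≤ K * h := by
    intro h h0 hh
    have hwsum : w = ∑ i ∈ tf, wt i • z i := by
      rw [← hcm, Finset.centerMass_eq_of_sum_1 _ _ hwt1]
    have hdecomp : T h w - w = ∑ i ∈ tf, wt i • (T h (z i) - z i) := by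
      rw [hwsum, map_sum, ← Finset.sum_sub_distrib]
      apply Finset.sum_congr rfl
      intro i hi
      rw [(T h).map_smul_of_tower, smul_sub]
    rw [hdecomp]
    calc ‖∑ i ∈ tf, wt i • (T h (z i) - z i)‖
        ≤ ∑ i ∈ tf, ‖wt i • (T h (z i) - z i)‖ := norm_sum_le _ _
      _ ≤ ∑ i ∈ tf, wt i * ((rz i)⁻¹ * (2*(M*‖x‖)*h)) := by
          apply Finset.sum_le_sum
          intro i hi
          rw [norm_smul, Real.norm_eq_abs, abs_of_nonneg (hwt0 i hi)]
          apply mul_le_mul_of_nonneg_left _ (hwt0 i hi)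
          rw [← hrzeq i hi, (T h).map_smul_of_tower, ← smul_sub, norm_smul,
            Real.norm_eq_abs, abs_of_nonneg (inv_nonneg.2 (hrz i hi).1.le)]
          exact mul_le_mul_of_nonneg_left
            (hTy h h0 hh (rz i) (hrz i hi).1 (hrz i hi).2)
            (inv_nonneg.2 (hrz i hi).1.le)
      _ = ∑ i ∈ tf, (wt i * ((rz i)⁻¹ * (2*(M*‖x‖)))) * h :=
          Finset.sum_congr rfl (fun i _ => by ring)
      _ = K * h := by rw [hKdef, Finset.sum_mul]
  set h₀ : ℝ := min δ' ((ε/4)/(K+1)) with hh₀def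
  have hh₀pos : 0 < h₀ := lt_min hδ'pos (by positivity)
  refine ⟨h₀, hh₀pos, fun {t} ht hdist => ?_⟩
  rw [Set.mem_Ioi] at ht
  rw [Real.dist_eq, sub_zero, abs_of_pos ht] at hdist
  have htδ' : t ≤ δ' := le_of_lt (lt_of_lt_of_le hdist (min_le_left _ _))
  have htK : t ≤ (ε/4)/(K+1) := le_of_lt (lt_of_lt_of_le hdist (min_le_right _ _))
  have hTt : ‖T t‖ ≤ M := hMb' t ht.le (htδ'.trans hδ'δ)
  have hKt : K * t ≤ ε/4 := by
    calc K * t ≤ (K+1) * ((ε/4)/(K+1)) :=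
          mul_le_mul (by linarith) htK ht.le (by positivity)
      _ = ε/4 := by field_simp
  have hsplit : T t x - x = T t (x - w) + (T t w - w) + (w - x) := by
    rw [map_sub]; abel
  rw [dist_eq_norm, hsplit]
  have h1 : ‖T t (x - w)‖ ≤ M * ε' := by
    refine le_trans ((T t).le_opNorm _) ?_
    exact mul_le_mul hTt hw_close.le (norm_nonneg _) hM0.le
  have h2 : ‖w - x‖ ≤ ε' := by rw [norm_sub_rev]; exact hw_close.le
  have hMε' : (M+1) * ε' = ε/4 := by
    rw [hε'def]; field_simp
  calc ‖T t (x - w) + (T t w - w) + (w - x)‖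
      ≤ ‖T t (x - w)‖ + ‖T t w - w‖ + ‖w - x‖ := norm_add₃_le
    _ ≤ M * ε' + K * t + ε' := add_le_add (add_le_add h1 (hTw t ht htδ')) h2
    _ ≤ ε/4 + ε/4 := by linarith
    _ < ε := by linarith

end FellerProof

/-- Feller property. Let `B` be a C*-bialgebra with residual
vanishing at infinity (so `R_μ = (id ⊗ μ)Δ` and `L_μ = (μ ⊗ id)Δ` map `B` to
`B`), and `(λ_t)` a convolution semigroup of functionals with associated
semigroup `P_t = R_{λ_t}` on `B`.  Then `(λ_t)` is weakly continuous iff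
`(P_t)` is a C₀-semigroup on `B`.  (Key identities: `λ_t = ε ∘ P_t`,
`μ ∘ P_t = λ_t ∘ L_μ` and `μ = ε ∘ L_μ`.) -/
theorem weakly_continuous_iff_C0
    {B : Type*}
    [NonUnitalNormedRing B] [StarRing B] [CStarRing B]
    [NormedSpace ℂ B] [CompleteSpace B]
    (ε : B →L[ℂ] ℂ)
    (lam : ℝ → (B →L[ℂ] ℂ))
    (L : (B →L[ℂ] ℂ) → (B →L[ℂ] B))
    (P : ℝ → (B →L[ℂ] B))
    -- `(P_t)` is a semigroup on `B`
    (hP0 : P 0 = ContinuousLinearMap.id ℂ B)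
    (hPsg : ∀ s t : ℝ, 0 ≤ s → 0 ≤ t → P (s + t) = (P s).comp (P t))
    -- `λ_t = ε ∘ P_t`
    (hlam : ∀ t : ℝ, 0 ≤ t → ∀ a : B, lam t a = ε (P t a))
    -- `μ ∘ P_t = λ_t ∘ L_μ`
    (hPL : ∀ t : ℝ, 0 ≤ t → ∀ (μ : B →L[ℂ] ℂ) (a : B), μ (P t a) = lam t (L μ a))
    -- `μ = ε ∘ L_μ`
    (hcounit : ∀ (μ : B →L[ℂ] ℂ) (a : B), μ a = ε (L μ a)) :
    (∀ a : B, Tendsto (fun t => lam t a) (𝓝[>] (0 : ℝ)) (𝓝 (ε a))) ↔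
      (∀ a : B, Tendsto (fun t => P t a) (𝓝[>] (0 : ℝ)) (𝓝 a)) := by
  constructor
  · intro hlamcont a
    apply FellerProof.strong_continuity P hP0 hPsg _ a
    intro μ b
    have h1 : ∀ᶠ t in 𝓝[>] (0:ℝ), μ (P t b) = lam t (L μ b) := by
      filter_upwards [self_mem_nhdsWithin] with t ht
      exact hPL t (le_of_lt ht) μ b
    have h2 : Tendsto (fun t => lam t (L μ b)) (𝓝[>] (0:ℝ)) (𝓝 (ε (L μ b))) :=
      hlamcont (L μ b)
    rw [← hcounit μ b] at h2
    exact h2.congr' (h1.mono fun t ht => ht.symm)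
  · intro hPcont a
    have h1 : Tendsto (fun t => ε (P t a)) (𝓝[>] (0:ℝ)) (𝓝 (ε a)) :=
      (ε.continuous.tendsto a).comp (hPcont a)
    refine h1.congr' ?_
    filter_upwards [self_mem_nhdsWithin] with t ht
    exact (hlam t (le_of_lt ht) a).symm
end

section
/- A one-parameter semigroup (P_t)_{t≥0} of bounded operators on a Banach space X with P₀ = id is strongly continuous (a C₀-semigroup) if it is weakly continuous at 0, i.e. μ(P_t x) → μ(x) as t → 0⁺ for every x ∈ X and μ ∈ X*. -/
open Filter Topology
open MeasureTheory TopologicalSpace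

section Aux

variable {X : Type*} [NormedAddCommGroup X] [NormedSpace ℂ X]


/-- Hahn–Banach: a functional annihilating a closed subspace but not a point outside it. -/
lemma aux_dual_annihilator {X : Type*} [NormedAddCommGroup X] [NormedSpace ℂ X]
    (Y : Submodule ℂ X) (hY : IsClosed (Y : Set X)) {x : X} (hx : x ∉ Y) :
    ∃ μ : X →L[ℂ] ℂ, (∀ y ∈ Y, μ y = 0) ∧ μ x ≠ 0 := by
  haveI : IsClosed (Y : Set X) := hY
  let q : X →L[ℂ] (X ⧸ Y) :=
    LinearMap.mkContinuous Y.mkQ 1 (fun m => by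
      simpa using Submodule.Quotient.norm_mk_le Y m)
  have hxq : (Submodule.Quotient.mk x : X ⧸ Y) ≠ 0 := by
    simpa [Submodule.Quotient.mk_eq_zero] using hx
  obtain ⟨g, -, hg⟩ := exists_dual_vector ℂ _ (norm_ne_zero_iff.2 hxq)
  refine ⟨g.comp q, fun y hy => ?_, ?_⟩
  · have : q y = 0 := by
      simpa [q, Submodule.Quotient.mk_eq_zero] using hy
    simp [this]
  · have : g (q x) = ‖(Submodule.Quotient.mk x : X ⧸ Y)‖ := by
      simpa [q] using hg
    simp only [ContinuousLinearMap.comp_apply, this]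
    exact_mod_cast (norm_ne_zero_iff.2 hxq)


/-- Weak right-continuity at every `s ≥ 0`, within `Ici 0`. -/
lemma aux_weak_right (P : ℝ → (X →L[ℂ] X))
    (hPsg : ∀ s t : ℝ, 0 ≤ s → 0 ≤ t → P (s + t) = (P s).comp (P t))
    (hweak : ∀ (x : X) (μ : StrongDual ℂ X),
      Tendsto (fun t => μ (P t x)) (𝓝[>] (0 : ℝ)) (𝓝 (μ x)))
    (x : X) (μ : X →L[ℂ] ℂ) (s : ℝ) (hs : 0 ≤ s) :
    Tendsto (fun h => μ (P (s + h) x)) (𝓝[Set.Ici (0:ℝ)] 0) (𝓝 (μ (P s x))) := by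
  have hIoi : Tendsto (fun h => μ (P (s + h) x)) (𝓝[>] (0:ℝ)) (𝓝 (μ (P s x))) := by
    have h1 := hweak (P s x) μ
    refine (tendsto_congr' ?_).2 h1
    filter_upwards [self_mem_nhdsWithin] with h hh
    have := hPsg h s (le_of_lt hh) hs
    rw [add_comm s h, this]
    rfl
  have hIci : Set.Ici (0:ℝ) = {0} ∪ Set.Ioi 0 := by
    ext t; simp [le_iff_lt_or_eq, or_comm, eq_comm]
  rw [hIci, nhdsWithin_union, tendsto_sup, nhdsWithin_singleton]
  refine ⟨?_, hIoi⟩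
  have : μ (P (s + 0) x) = μ (P s x) := by rw [add_zero]
  simpa [this] using tendsto_pure_nhds (fun h => μ (P (s + h) x)) 0

/-- Convergence of the rational-time discretization. -/
lemma aux_conv (P : ℝ → (X →L[ℂ] X)) (x : X) (μ : X →L[ℂ] ℂ)
    (hwR : ∀ s : ℝ, 0 ≤ s →
      Tendsto (fun h => μ (P (s + h) x)) (𝓝[Set.Ici (0:ℝ)] 0) (𝓝 (μ (P s x))))
    (s : ℝ) :
    Tendsto (fun n : ℕ => μ (P (max ((⌈s * (n+1)⌉ : ℝ) / (n+1)) 0) x)) atTop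
      (𝓝 (μ (P (max s 0) x))) := by
  rcases le_or_gt 0 s with hs | hs
  · -- s ≥ 0
    set u : ℕ → ℝ := fun n => (⌈s * (n+1)⌉ : ℝ) / (n+1) with hu
    have hpos : ∀ n : ℕ, (0:ℝ) < (n:ℝ) + 1 := fun n => by positivity
    have hge : ∀ n, s ≤ u n := by
      intro n
      rw [hu, le_div_iff₀ (hpos n)]
      exact_mod_cast Int.le_ceil (s * (n+1))
    have hle : ∀ n, u n - s ≤ 1 / ((n:ℝ)+1) := by
      intro n
      have h1 : (⌈s * ((n:ℝ)+1)⌉ : ℝ) < s * ((n:ℝ)+1) + 1 := Int.ceil_lt_add_one _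
      rw [sub_le_iff_le_add, hu]
      rw [div_le_iff₀ (hpos n), add_mul, one_div_mul_cancel (hpos n).ne']
      linarith
    have hts : Tendsto (fun n : ℕ => u n - s) atTop (𝓝[Set.Ici (0:ℝ)] 0) := by
      refine tendsto_nhdsWithin_iff.2 ⟨?_, Eventually.of_forall fun n => by
        simpa [sub_nonneg] using hge n⟩
      refine tendsto_of_tendsto_of_tendsto_of_le_of_le tendsto_const_nhds
        tendsto_one_div_add_atTop_nhds_zero_nat
        (fun n => by simpa [sub_nonneg] using hge n) (fun n => by simpa using hle n)
    have := (hwR s hs).comp hts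
    have heq : ∀ n : ℕ, μ (P (s + (u n - s)) x) = μ (P (max (u n) 0) x) := by
      intro n
      rw [add_sub_cancel, max_eq_left (le_trans hs (hge n))]
    have hmax : max s 0 = s := max_eq_left hs
    rw [hmax]
    refine (tendsto_congr ?_).1 this
    intro n; exact (heq n)
  · -- s < 0 : eventually constant
    have hmax : max s 0 = 0 := max_eq_right hs.le
    rw [hmax]
    have hneg : ∀ n : ℕ, (⌈s * ((n:ℝ)+1)⌉ : ℝ) / ((n:ℝ)+1) ≤ 0 := by
      intro n
      have hpos : (0:ℝ) < (n:ℝ) + 1 := by positivity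
      apply div_nonpos_of_nonpos_of_nonneg _ hpos.le
      have h2 : s * ((n:ℝ)+1) < 0 := mul_neg_of_neg_of_pos hs hpos
      have : (⌈s * ((n:ℝ)+1)⌉ : ℤ) ≤ 0 := Int.ceil_le.2 (by push_cast; linarith)
      exact_mod_cast this
    have : (fun n : ℕ => μ (P (max ((⌈s * (n+1)⌉ : ℝ) / (n+1)) 0) x))
        = fun _ => μ (P 0 x) := by
      funext n; rw [max_eq_right (hneg n)]
    rw [this]
    exact tendsto_const_nhds

/-- Strong measurability of the orbit map. -/
lemma aux_sm (P : ℝ → (X →L[ℂ] X)) (x : X)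
    (hconv : ∀ (μ : X →L[ℂ] ℂ) (s : ℝ),
      Tendsto (fun n : ℕ => μ (P (max ((⌈s * (n+1)⌉ : ℝ) / (n+1)) 0) x)) atTop
        (𝓝 (μ (P (max s 0) x)))) :
    StronglyMeasurable (fun s : ℝ => P (max s 0) x) := by
  classical
  letI : MeasurableSpace X := borel X
  haveI : BorelSpace X := ⟨rfl⟩
  set f : ℝ → X := fun s => P (max s 0) x with hf
  set S : Set X := Set.range (fun q : ℚ => f (q : ℝ)) with hS
  set Y : Submodule ℂ X := (Submodule.span ℂ S).topologicalClosure with hY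
  have hSY : S ⊆ (Y : Set X) :=
    subset_trans Submodule.subset_span (Submodule.le_topologicalClosure _)
  have hYc : IsClosed (Y : Set X) := Submodule.isClosed_topologicalClosure _
  have hsep : IsSeparable (Y : Set X) := by
    have h1 : IsSeparable (closure ((Submodule.span ℂ S : Submodule ℂ X) : Set X)) :=
      ((Set.countable_range _).isSeparable.span).closure
    rwa [hY, Submodule.topologicalClosure_coe]
  have hg_mem : ∀ (n : ℕ) (s : ℝ), f ((⌈s * ((n:ℝ)+1)⌉ : ℝ) / ((n:ℝ)+1)) ∈ S := by
    intro n s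
    refine ⟨((⌈s * ((n:ℝ)+1)⌉ : ℚ) / ((n:ℚ)+1)), ?_⟩
    congr 1
    push_cast
    ring
  have hmeasμ : ∀ μ : X →L[ℂ] ℂ, Measurable (fun s => μ (f s)) := by
    intro μ
    have hm : ∀ n : ℕ, Measurable (fun s : ℝ => μ (f ((⌈s * ((n:ℝ)+1)⌉ : ℝ) / ((n:ℝ)+1)))) :=
      fun n => (measurable_of_countable (fun k : ℤ => μ (f ((k : ℝ) / ((n:ℝ)+1))))).comp
        (Int.measurable_ceil.comp (measurable_id.mul_const _))
    exact measurable_of_tendsto_metrizable hm (tendsto_pi_nhds.2 fun s => hconv μ s)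
  have hfY : ∀ s : ℝ, f s ∈ Y := by
    intro s
    by_contra hs
    obtain ⟨μ, hμ0, hμx⟩ := aux_dual_annihilator Y hYc hs
    have h0 : ∀ n : ℕ, μ (f ((⌈s * ((n:ℝ)+1)⌉ : ℝ) / ((n:ℝ)+1))) = 0 :=
      fun n => hμ0 _ (hSY (hg_mem n s))
    have h1 := hconv μ s
    rw [tendsto_congr h0] at h1
    exact hμx (tendsto_nhds_unique h1 tendsto_const_nhds)
  -- dense sequence in Y
  haveI := hsep.separableSpace
  haveI : Nonempty (Y : Set X) := ⟨⟨0, Y.zero_mem⟩⟩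
  obtain ⟨u, hu⟩ := TopologicalSpace.exists_dense_seq (Y : Set X)
  set e : ℕ → X := fun n => (u n : X) with he
  have heY : ∀ n, e n ∈ Y := fun n => (u n).2
  have hdense : ∀ z ∈ Y, ∀ ε > 0, ∃ n, ‖z - e n‖ < ε := by
    intro z hz ε hε
    have h1 : (⟨z, hz⟩ : (Y : Set X)) ∈ closure (Set.range u) := by
      rw [hu.closure_range]; trivial
    obtain ⟨b, hbmem, hbd⟩ := Metric.mem_closure_iff.1 h1 ε hε
    obtain ⟨n, rfl⟩ := hbmem
    exact ⟨n, by simpa [Subtype.dist_eq, dist_eq_norm] using hbd⟩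
  -- norming functionals
  have hμs : ∀ n : ℕ, ∃ μ : X →L[ℂ] ℂ, ‖μ‖ ≤ 1 ∧ μ (e n) = (‖e n‖ : ℂ) :=
    fun n => exists_dual_vector'' ℂ (e n)
  choose μs hμs1 hμs2 using hμs
  have hnorming : ∀ z ∈ Y, ∀ q : ℝ, (∀ m, ‖μs m z‖ ≤ q) → ‖z‖ ≤ q := by
    intro z hz q hq
    refine le_of_forall_pos_le_add fun ε hε => ?_
    obtain ⟨m, hm⟩ := hdense z hz (ε/2) (by positivity)
    have h1 : ‖z‖ ≤ ‖e m‖ + ε/2 := by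
      calc ‖z‖ = ‖(z - e m) + e m‖ := congrArg norm (by abel)
        _ ≤ ‖z - e m‖ + ‖e m‖ := norm_add_le _ _
        _ ≤ ε/2 + ‖e m‖ := by linarith
        _ = ‖e m‖ + ε/2 := by ring
    have h2 : ‖e m‖ ≤ q + ε/2 := by
      have h3 : ‖e m‖ = ‖μs m (e m)‖ := by rw [hμs2 m]; simp
      have h4 : ‖μs m (e m)‖ ≤ ‖μs m z‖ + ‖μs m (e m) - μs m z‖ := by
        calc ‖μs m (e m)‖ = ‖μs m z + (μs m (e m) - μs m z)‖ := congrArg norm (by abel)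
          _ ≤ ‖μs m z‖ + ‖μs m (e m) - μs m z‖ := norm_add_le _ _
      have h5 : ‖μs m (e m) - μs m z‖ ≤ ε/2 := by
        rw [← map_sub]
        calc ‖μs m (e m - z)‖ ≤ ‖μs m‖ * ‖e m - z‖ := (μs m).le_opNorm _
          _ ≤ 1 * (ε/2) := by
            apply mul_le_mul (hμs1 m) _ (norm_nonneg _) zero_le_one
            rw [norm_sub_rev]; exact hm.le
          _ = ε/2 := one_mul _
      rw [h3]
      calc ‖μs m (e m)‖ ≤ ‖μs m z‖ + ‖μs m (e m) - μs m z‖ := h4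
        _ ≤ q + ε/2 := add_le_add (hq m) h5
    linarith
  have hmeas : Measurable f := by
    apply measurable_of_isOpen
    intro U hU
    have key : f ⁻¹' U = ⋃ (n : ℕ) (q : ℚ)
        (_ : 0 < (q:ℝ) ∧ Metric.closedBall (e n) (q:ℝ) ⊆ U),
        ⋂ m : ℕ, {s : ℝ | ‖μs m (f s) - μs m (e n)‖ ≤ (q:ℝ)} := by
      ext s
      simp only [Set.mem_preimage, Set.mem_iUnion, Set.mem_iInter, Set.mem_setOf_eq]
      constructor
      · intro hsU
        obtain ⟨ε, hε, hball⟩ := Metric.isOpen_iff.1 hU (f s) hsU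
        obtain ⟨n, hn⟩ := hdense (f s) (hfY s) (ε/3) (by positivity)
        obtain ⟨q, hq1, hq2⟩ := exists_rat_btwn (show ε/3 < ε/2 by linarith)
        refine ⟨n, q, ⟨lt_trans (by positivity) hq1, ?_⟩, ?_⟩
        · intro z hz
          apply hball
          rw [Metric.mem_ball]
          rw [Metric.mem_closedBall] at hz
          calc dist z (f s) ≤ dist z (e n) + dist (e n) (f s) := dist_triangle _ _ _
            _ < ε/2 + ε/3 := by
              have : dist (e n) (f s) < ε/3 := by
                rw [dist_comm, dist_eq_norm]; exact hn
              have hz' : dist z (e n) < ε/2 := lt_of_le_of_lt hz hq2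
              linarith
            _ < ε := by linarith
        · intro m
          rw [← map_sub]
          calc ‖μs m (f s - e n)‖ ≤ ‖μs m‖ * ‖f s - e n‖ := (μs m).le_opNorm _
            _ ≤ 1 * ‖f s - e n‖ := by
              apply mul_le_mul_of_nonneg_right (hμs1 m) (norm_nonneg _)
            _ = ‖f s - e n‖ := one_mul _
            _ ≤ (q:ℝ) := le_of_lt (lt_trans hn hq1)
      · rintro ⟨n, q, ⟨hq0, hqU⟩, hm⟩
        have h1 : ‖f s - e n‖ ≤ (q:ℝ) := by
          apply hnorming _ (Y.sub_mem (hfY s) (heY n)) _ (fun m => ?_)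
          rw [map_sub]; exact hm m
        exact hqU (by rw [Metric.mem_closedBall, dist_eq_norm]; exact h1)
    rw [key]
    refine MeasurableSet.iUnion fun n => MeasurableSet.iUnion fun q =>
      MeasurableSet.iUnion fun _ => MeasurableSet.iInter fun m => ?_
    exact measurableSet_le
      (((hmeasμ (μs m)).sub measurable_const).norm) measurable_const
  refine stronglyMeasurable_iff_measurable_separable.2 ⟨hmeas, ?_⟩
  exact hsep.mono (Set.range_subset_iff.2 hfY)

section Complete
variable [CompleteSpace X]

/-- Uniform boundedness of the semigroup near `0`. -/
lemma aux_bound (P : ℝ → (X →L[ℂ] X))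
    (hweak : ∀ (x : X) (μ : StrongDual ℂ X),
      Tendsto (fun t => μ (P t x)) (𝓝[>] (0 : ℝ)) (𝓝 (μ x))) :
    ∃ δ : ℝ, 0 < δ ∧ ∃ M : ℝ, 1 ≤ M ∧ ∀ t, 0 < t → t ≤ δ → ‖P t‖ ≤ M := by
  by_contra hcon
  push_neg at hcon
  have hstep : ∀ n : ℕ, ∃ t, 0 < t ∧ t ≤ 1/((n:ℝ)+1) ∧ (n:ℝ) < ‖P t‖ := by
    intro n
    obtain ⟨t, ht0, htle, hM⟩ := hcon (1/((n:ℝ)+1)) (by positivity) (max (n:ℝ) 1)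
      (le_max_right _ _)
    exact ⟨t, ht0, htle, lt_of_le_of_lt (le_max_left _ _) hM⟩
  choose t ht0 htle htM using hstep
  have htt : Tendsto t atTop (𝓝[>] (0:ℝ)) := by
    refine tendsto_nhdsWithin_iff.2 ⟨?_, Eventually.of_forall fun n => ht0 n⟩
    exact tendsto_of_tendsto_of_tendsto_of_le_of_le tendsto_const_nhds
      tendsto_one_div_add_atTop_nhds_zero_nat (fun n => (ht0 n).le) htle
  -- pointwise boundedness of ‖P (t n) x‖ via Banach–Steinhaus in the dual
  have hpt : ∀ x : X, ∃ C, ∀ n, ‖P (t n) x‖ ≤ C := by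
    intro x
    have h1 : ∀ μ : StrongDual ℂ X, ∃ C, ∀ n, ‖(NormedSpace.inclusionInDoubleDual ℂ X (P (t n) x)) μ‖ ≤ C := by
      intro μ
      have := (hweak x μ).comp htt
      have hb : BddAbove (Set.range fun n => ‖μ (P (t n) x)‖) := (this.norm).bddAbove_range
      obtain ⟨C, hC⟩ := hb
      exact ⟨C, fun n => hC (Set.mem_range_self n)⟩
    obtain ⟨C, hC⟩ := banach_steinhaus h1
    refine ⟨C, fun n => ?_⟩
    have h2 : ‖NormedSpace.inclusionInDoubleDual ℂ X (P (t n) x)‖ = ‖P (t n) x‖ :=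
      (NormedSpace.inclusionInDoubleDualLi ℂ (E := X)).norm_map (P (t n) x)
    rw [← h2]
    exact hC n
  obtain ⟨C, hC⟩ := banach_steinhaus (fun x => hpt x)
  obtain ⟨n, hn⟩ := exists_nat_gt C
  exact absurd (hC n) (not_le.2 (lt_trans hn (htM n)))

omit [CompleteSpace X] in
/-- Local exponential-type bound on compact intervals. -/
lemma aux_growth (P : ℝ → (X →L[ℂ] X))
    (hP0 : P 0 = ContinuousLinearMap.id ℂ X)
    (hPsg : ∀ s t : ℝ, 0 ≤ s → 0 ≤ t → P (s + t) = (P s).comp (P t))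
    {δ M : ℝ} (hδ : 0 < δ) (hM : 1 ≤ M) (h : ∀ t, 0 < t → t ≤ δ → ‖P t‖ ≤ M) :
    ∀ T : ℝ, 0 ≤ T → ∃ C : ℝ, 1 ≤ C ∧ ∀ t, 0 ≤ t → t ≤ T → ‖P t‖ ≤ C := by
  have h0 : ∀ t, 0 ≤ t → t ≤ δ → ‖P t‖ ≤ M := by
    intro t ht htδ
    rcases eq_or_lt_of_le ht with h' | h'
    · rw [← h', hP0]
      exact le_trans ContinuousLinearMap.norm_id_le hM
    · exact h t h' htδ
  have key : ∀ n : ℕ, ∀ t, 0 ≤ t → t ≤ ((n:ℝ)+1) * δ → ‖P t‖ ≤ M ^ (n+1) := by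
    intro n
    induction n with
    | zero => intro t ht htn; simpa using h0 t ht (by simpa using htn)
    | succ k ih =>
      intro t ht htn
      rcases le_or_gt t δ with h' | h'
      · calc ‖P t‖ ≤ M := h0 t ht h'
          _ ≤ M ^ (k+2) := by
            nth_rewrite 1 [← pow_one M]
            exact pow_le_pow_right₀ hM (by omega)
      · have h1 : P t = (P δ).comp (P (t - δ)) := by
          have := hPsg δ (t - δ) hδ.le (by linarith)
          rwa [add_sub_cancel] at this
        have h2 : ‖P (t - δ)‖ ≤ M ^ (k+1) := by
          apply ih (t - δ) (by linarith)
          push_cast at htn ⊢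
          linarith
        calc ‖P t‖ ≤ ‖P δ‖ * ‖P (t - δ)‖ := by rw [h1]; exact ContinuousLinearMap.opNorm_comp_le _ _
          _ ≤ M * M ^ (k+1) := by
            apply mul_le_mul (h0 δ hδ.le le_rfl) h2 (norm_nonneg _) (by linarith)
          _ = M ^ (k+2) := by ring
  intro T hT
  obtain ⟨n, hn⟩ := exists_nat_ge (T / δ)
  refine ⟨M ^ (n+1), one_le_pow₀ hM, fun t ht htT => key n t ht ?_⟩
  have : T ≤ ((n:ℝ)+1) * δ := by
    rw [div_le_iff₀ hδ] at hn
    nlinarith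
  linarith

end Complete

end Aux

/-- A one-parameter semigroup `(P_t)_{t ≥ 0}` of bounded
operators on a Banach space `X` with `P₀ = id` which is weakly continuous at
`0` (i.e. `μ(P_t x) → μ(x)` as `t → 0⁺` for every `x ∈ X`, `μ ∈ X*`) is
strongly continuous, i.e. a C₀-semigroup. -/
theorem weakly_continuous_semigroup_is_C0
    {X : Type*} [NormedAddCommGroup X] [NormedSpace ℂ X] [CompleteSpace X]
    (P : ℝ → (X →L[ℂ] X))
    (hP0 : P 0 = ContinuousLinearMap.id ℂ X)
    (hPsg : ∀ s t : ℝ, 0 ≤ s → 0 ≤ t → P (s + t) = (P s).comp (P t))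
    (hweak : ∀ (x : X) (μ : StrongDual ℂ X),
      Tendsto (fun t => μ (P t x)) (𝓝[>] (0 : ℝ)) (𝓝 (μ x))) :
    ∀ x : X, ContinuousOn (fun t => P t x) (Set.Ici (0 : ℝ)) := by
  obtain ⟨δ, hδ, M, hM, hbound⟩ := aux_bound P hweak
  -- The space of vectors where strong continuity at 0⁺ holds
  let D : Submodule ℂ X :=
    { carrier := {y : X | Tendsto (fun t => P t y) (𝓝[>] (0:ℝ)) (𝓝 y)}
      add_mem' := fun {a b} ha hb => by
        have := Tendsto.add ha hb
        show Tendsto (fun t => P t (a + b)) (𝓝[>] (0:ℝ)) (𝓝 (a + b))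
        simpa only [← map_add] using this
      zero_mem' := by
        simp only [Set.mem_setOf_eq, map_zero]
        exact tendsto_const_nhds
      smul_mem' := fun c y hy => by
        have h1 : ∀ t : ℝ, P t (c • y) = c • P t y := fun t => (P t).map_smul c y
        show Tendsto (fun t => P t (c • y)) (𝓝[>] (0:ℝ)) (𝓝 (c • y))
        simp only [h1]
        exact hy.const_smul c }
  -- closure of D consists of good vectors
  have hclosure : ∀ y ∈ closure (D : Set X),
      Tendsto (fun t => P t y) (𝓝[>] (0:ℝ)) (𝓝 y) := by
    intro y hy
    rw [Metric.tendsto_nhdsWithin_nhds]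
    intro ε hε
    obtain ⟨z, hzD, hdistyz⟩ := Metric.mem_closure_iff.1 hy (ε/(3*M)) (by positivity)
    have hzt : Tendsto (fun t => P t z) (𝓝[>] (0:ℝ)) (𝓝 z) := hzD
    rw [Metric.tendsto_nhdsWithin_nhds] at hzt
    obtain ⟨δ₂, hδ₂, hz2⟩ := hzt (ε/3) (by positivity)
    refine ⟨min δ δ₂, by positivity, fun {t} ht htd => ?_⟩
    have ht0 : 0 < t := ht
    have htδ : t ≤ δ := by
      have : |t| < min δ δ₂ := by simpa [Real.dist_eq] using htd
      have := lt_of_abs_lt this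
      exact le_of_lt (lt_of_lt_of_le this (min_le_left _ _))
    have htδ₂ : dist t 0 < δ₂ := lt_of_lt_of_le htd (min_le_right _ _)
    have h1 : dist (P t y) (P t z) < ε/3 := by
      rw [dist_eq_norm, ← map_sub]
      calc ‖P t (y - z)‖ ≤ ‖P t‖ * ‖y - z‖ := (P t).le_opNorm _
        _ ≤ M * ‖y - z‖ :=
          mul_le_mul_of_nonneg_right (hbound t ht0 htδ) (norm_nonneg _)
        _ < M * (ε/(3*M)) := by
          apply mul_lt_mul_of_pos_left _ (by linarith)
          rwa [dist_eq_norm] at hdistyz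
        _ = ε/3 := by field_simp
    have h2 : dist (P t z) z < ε/3 := hz2 ht htδ₂
    have h3 : dist z y < ε/3 := by
      rw [dist_comm] at hdistyz
      calc dist z y < ε/(3*M) := hdistyz
        _ ≤ ε/3 := by
          apply div_le_div_of_nonneg_left hε.le (by norm_num) ?_
          nlinarith
    calc dist (P t y) y ≤ dist (P t y) (P t z) + dist (P t z) z + dist z y :=
          dist_triangle4 _ _ _ _
      _ < ε/3 + ε/3 + ε/3 := by linarith
      _ = ε := by ring
  -- every vector lies in the closure of D
  have hxK : ∀ x : X, x ∈ closure (D : Set X) := by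
    intro x
    by_contra hx
    have hx' : x ∉ D.topologicalClosure := by
      rwa [← SetLike.mem_coe, Submodule.topologicalClosure_coe]
    obtain ⟨μ, hμ0, hμx⟩ := aux_dual_annihilator D.topologicalClosure
      (Submodule.isClosed_topologicalClosure _) hx'
    set f : ℝ → X := fun s => P (max s 0) x with hf
    have hsm : StronglyMeasurable f :=
      aux_sm P x (fun ν s => aux_conv P x ν (aux_weak_right P hPsg hweak x ν) s)
    obtain ⟨C, hC1, hC⟩ := aux_growth P hP0 hPsg hδ hM hbound 2 (by norm_num)
    have hbnd : ∀ s : ℝ, 0 ≤ s → s ≤ 2 → ‖f s‖ ≤ C * ‖x‖ := by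
      intro s h1 h2
      have hmax : max s 0 = s := max_eq_left h1
      rw [hf]; dsimp only; rw [hmax]
      calc ‖P s x‖ ≤ ‖P s‖ * ‖x‖ := (P s).le_opNorm _
        _ ≤ C * ‖x‖ := mul_le_mul_of_nonneg_right (hC s h1 h2) (norm_nonneg _)
    have hint : IntervalIntegrable f volume 0 2 := by
      rw [intervalIntegrable_iff, Set.uIoc_of_le (by norm_num : (0:ℝ) ≤ 2)]
      apply Integrable.mono' (integrable_const (C * ‖x‖))
        hsm.aestronglyMeasurable.restrict
      filter_upwards [ae_restrict_mem measurableSet_Ioc] with s hs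
      exact hbnd s hs.1.le hs.2
    have hsub : ∀ a b : ℝ, 0 ≤ a → a ≤ 2 → 0 ≤ b → b ≤ 2 →
        IntervalIntegrable f volume a b := by
      intro a b ha ha2 hb hb2
      apply hint.mono_set
      apply Set.uIcc_subset_uIcc <;> rw [Set.mem_uIcc] <;> left <;> constructor <;> assumption
    set y : ℝ → X := fun r => (r⁻¹ : ℝ) • ∫ s in (0:ℝ)..r, f s with hy
    -- each y r with 0 < r ≤ 1 lies in D
    have hyD : ∀ r : ℝ, 0 < r → r ≤ 1 → y r ∈ D := by
      intro r hr0 hr1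
      show Tendsto (fun t => P t (y r)) (𝓝[>] (0:ℝ)) (𝓝 (y r))
      rw [tendsto_iff_norm_sub_tendsto_zero]
      have hbd : ∀ h : ℝ, h ∈ Set.Ioc (0:ℝ) 1 →
          ‖P h (y r) - y r‖ ≤ (2*C*‖x‖/r) * h := by
        intro h hh
        have hh0 : 0 < h := hh.1
        have hh1 : h ≤ 1 := hh.2
        have key : P h (∫ s in (0:ℝ)..r, f s) = ∫ s in h..(r+h), f s := by
          have e1 : (∫ s in (0:ℝ)..r, P h (f s)) = P h (∫ s in (0:ℝ)..r, f s) :=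
            ContinuousLinearMap.intervalIntegral_comp_comm (P h)
              (hsub 0 r le_rfl (by norm_num) hr0.le (by linarith))
          rw [← e1]
          have e2 : (∫ s in (0:ℝ)..r, P h (f s)) = ∫ s in (0:ℝ)..r, f (s + h) := by
            apply intervalIntegral.integral_congr
            intro s hs
            rw [Set.uIcc_of_le hr0.le] at hs
            have hs0 : 0 ≤ s := hs.1
            show P h (f s) = f (s + h)
            have : f s = P s x := by rw [hf]; dsimp only; rw [max_eq_left hs0]
            have h2 : f (s + h) = P (s + h) x := by
              rw [hf]; dsimp only; rw [max_eq_left (by linarith)]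
            rw [this, h2, add_comm s h, hPsg h s hh0.le hs0]
            rfl
          rw [e2]
          have := intervalIntegral.integral_comp_add_right (a := (0:ℝ)) (b := r) f h
          rw [this, zero_add]
        have hI0h : IntervalIntegrable f volume 0 h :=
          hsub 0 h le_rfl (by norm_num) hh0.le (by linarith)
        have hIhrh : IntervalIntegrable f volume h (r+h) :=
          hsub h (r+h) hh0.le (by linarith) (by linarith) (by linarith)
        have hI0r : IntervalIntegrable f volume 0 r :=
          hsub 0 r le_rfl (by norm_num) hr0.le (by linarith)
        have hIrrh : IntervalIntegrable f volume r (r+h) :=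
          hsub r (r+h) hr0.le (by linarith) (by linarith) (by linarith)
        have A1 : (∫ s in (0:ℝ)..h, f s) + (∫ s in h..(r+h), f s)
            = ∫ s in (0:ℝ)..(r+h), f s :=
          intervalIntegral.integral_add_adjacent_intervals hI0h hIhrh
        have A2 : (∫ s in (0:ℝ)..r, f s) + (∫ s in r..(r+h), f s)
            = ∫ s in (0:ℝ)..(r+h), f s :=
          intervalIntegral.integral_add_adjacent_intervals hI0r hIrrh
        have hdiff : P h (y r) - y r
            = (r⁻¹ : ℝ) • ((∫ s in r..(r+h), f s) - (∫ s in (0:ℝ)..h, f s)) := by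
          rw [hy]; dsimp only
          rw [(P h).map_smul_of_tower, key, ← smul_sub]
          congr 1
          have := A1.trans A2.symm
          -- a + b = c + d  ⇒  b - c = d - a
          have habcd : (∫ s in h..(r+h), f s) - (∫ s in (0:ℝ)..r, f s)
              = (∫ s in r..(r+h), f s) - (∫ s in (0:ℝ)..h, f s) := by
            rw [sub_eq_sub_iff_add_eq_add]
            rw [add_comm] at this
            rw [this]; abel
          exact habcd
        rw [hdiff]
        have n1 : ‖∫ s in r..(r+h), f s‖ ≤ C * ‖x‖ * h := by
          have := intervalIntegral.norm_integral_le_of_norm_le_const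
            (C := C * ‖x‖) (f := f) (a := r) (b := r+h) ?_
          · calc ‖∫ s in r..(r+h), f s‖ ≤ C * ‖x‖ * |r + h - r| := this
              _ = C * ‖x‖ * h := by rw [add_sub_cancel_left, abs_of_pos hh0]
          · intro s hs
            rw [Set.uIoc_of_le (by linarith)] at hs
            exact hbnd s (by linarith [hs.1]) (by linarith [hs.2])
        have n2 : ‖∫ s in (0:ℝ)..h, f s‖ ≤ C * ‖x‖ * h := by
          have := intervalIntegral.norm_integral_le_of_norm_le_const
            (C := C * ‖x‖) (f := f) (a := 0) (b := h) ?_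
          · calc ‖∫ s in (0:ℝ)..h, f s‖ ≤ C * ‖x‖ * |h - 0| := this
              _ = C * ‖x‖ * h := by rw [sub_zero, abs_of_pos hh0]
          · intro s hs
            rw [Set.uIoc_of_le (by linarith)] at hs
            exact hbnd s hs.1.le (by linarith [hs.2])
        rw [norm_smul]
        calc ‖(r⁻¹:ℝ)‖ * ‖(∫ s in r..(r+h), f s) - (∫ s in (0:ℝ)..h, f s)‖
            ≤ r⁻¹ * (C * ‖x‖ * h + C * ‖x‖ * h) := by
              apply mul_le_mul
              · rw [Real.norm_eq_abs, abs_of_pos (by positivity)]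
              · exact le_trans (norm_sub_le _ _) (add_le_add n1 n2)
              · exact norm_nonneg _
              · positivity
          _ = (2*C*‖x‖/r) * h := by field_simp; ring
      apply squeeze_zero'
      · filter_upwards with h; exact norm_nonneg _
      · filter_upwards [Ioc_mem_nhdsGT zero_lt_one] with h hh
        exact hbd h hh
      · have h1 : Tendsto (fun h : ℝ => (2*C*‖x‖/r) * h) (𝓝 (0:ℝ))
            (𝓝 ((2*C*‖x‖/r) * 0)) := tendsto_id.const_mul _
        rw [mul_zero] at h1
        exact h1.mono_left nhdsWithin_le_nhds
    -- weak convergence of y r to x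
    have hyw : Tendsto (fun r => μ (y r)) (𝓝[>] (0:ℝ)) (𝓝 (μ x)) := by
      rw [Metric.tendsto_nhdsWithin_nhds]
      intro ε hε
      have hw := hweak x μ
      rw [Metric.tendsto_nhdsWithin_nhds] at hw
      obtain ⟨δ₁, hδ₁, hw1⟩ := hw (ε/2) (by positivity)
      refine ⟨min δ₁ 1, by positivity, fun {r} hr hrd => ?_⟩
      have hr0 : 0 < r := hr
      have hrδ₁ : r < δ₁ := by
        have : |r| < min δ₁ 1 := by simpa [Real.dist_eq] using hrd
        exact lt_of_lt_of_le (lt_of_abs_lt this) (min_le_left _ _)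
      have hr1 : r ≤ 1 := by
        have : |r| < min δ₁ 1 := by simpa [Real.dist_eq] using hrd
        exact le_of_lt (lt_of_lt_of_le (lt_of_abs_lt this) (min_le_right _ _))
      have hI : IntervalIntegrable f volume 0 r :=
        hsub 0 r le_rfl (by norm_num) hr0.le (by linarith)
      have hIμ : IntervalIntegrable (fun s => μ (f s)) volume 0 r :=
        ⟨μ.integrable_comp hI.1, μ.integrable_comp hI.2⟩
      have e1 : μ (y r) = (r⁻¹ : ℝ) • (∫ s in (0:ℝ)..r, μ (f s)) := by
        rw [hy]; dsimp only
        rw [μ.map_smul_of_tower, ContinuousLinearMap.intervalIntegral_comp_comm μ hI]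
      have e2 : μ (y r) - μ x = (r⁻¹ : ℝ) • (∫ s in (0:ℝ)..r, (μ (f s) - μ x)) := by
        rw [intervalIntegral.integral_sub hIμ intervalIntegrable_const,
          intervalIntegral.integral_const, smul_sub, ← e1, sub_zero, smul_smul,
          inv_mul_cancel₀ hr0.ne', one_smul]
      rw [dist_eq_norm, e2, norm_smul]
      have n3 : ‖∫ s in (0:ℝ)..r, (μ (f s) - μ x)‖ ≤ (ε/2) * r := by
        have := intervalIntegral.norm_integral_le_of_norm_le_const
          (C := ε/2) (f := fun s => μ (f s) - μ x) (a := 0) (b := r) ?_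
        · calc ‖∫ s in (0:ℝ)..r, (μ (f s) - μ x)‖ ≤ ε/2 * |r - 0| := this
            _ = ε/2 * r := by rw [sub_zero, abs_of_pos hr0]
        · intro s hs
          rw [Set.uIoc_of_le hr0.le] at hs
          have hs0 : 0 < s := hs.1
          show ‖μ (f s) - μ x‖ ≤ ε/2
          have hfs : f s = P s x := by rw [hf]; dsimp only; rw [max_eq_left hs0.le]
          rw [hfs, ← dist_eq_norm]
          exact le_of_lt (hw1 hs0 (by rw [Real.dist_eq, sub_zero, abs_of_pos hs0]; linarith [hs.2]))
      calc ‖(r⁻¹:ℝ)‖ * ‖∫ s in (0:ℝ)..r, (μ (f s) - μ x)‖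
          ≤ r⁻¹ * ((ε/2) * r) := by
            apply mul_le_mul _ n3 (norm_nonneg _) (by positivity)
            rw [Real.norm_eq_abs, abs_of_pos (by positivity)]
        _ = ε/2 := by field_simp
        _ < ε := by linarith
    have hy0 : ∀ᶠ r in 𝓝[>] (0:ℝ), μ (y r) = 0 := by
      filter_upwards [Ioc_mem_nhdsGT zero_lt_one] with r hr
      exact hμ0 _ (Submodule.le_topologicalClosure _ (hyD r hr.1 hr.2))
    have hz : Tendsto (fun _ : ℝ => (0:ℂ)) (𝓝[>] (0:ℝ)) (𝓝 (μ x)) :=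
      (tendsto_congr' hy0).1 hyw
    exact hμx (tendsto_nhds_unique hz tendsto_const_nhds)
  have main : ∀ x : X, Tendsto (fun t => P t x) (𝓝[>] (0:ℝ)) (𝓝 x) :=
    fun x => hclosure x (hxK x)
  -- conclude: continuity on Ici 0
  intro x t₀ ht₀
  have ht₀' : (0:ℝ) ≤ t₀ := ht₀
  obtain ⟨C, hC1, hC⟩ := aux_growth P hP0 hPsg hδ hM hbound (t₀ + 1) (by linarith)
  rw [Metric.continuousWithinAt_iff]
  intro ε hε
  have hmx := main x
  rw [Metric.tendsto_nhdsWithin_nhds] at hmx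
  obtain ⟨δ₃, hδ₃, hm3⟩ := hmx (ε/C) (by positivity)
  refine ⟨min δ₃ 1, by positivity, fun {t} ht htd => ?_⟩
  have ht' : (0:ℝ) ≤ t := ht
  have habs : |t - t₀| < min δ₃ 1 := by simpa [Real.dist_eq] using htd
  rcases lt_trichotomy t t₀ with hlt | heq | hgt
  · -- t < t₀ : P t₀ x - P t x = P t (P (t₀ - t) x - x)
    have hkey : P t₀ = (P t).comp (P (t₀ - t)) := by
      have := hPsg t (t₀ - t) ht' (by linarith)
      rwa [add_sub_cancel] at this
    have hd : dist (P t x) (P t₀ x) = ‖P t (P (t₀ - t) x - x)‖ := by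
      rw [dist_eq_norm, hkey]
      simp only [ContinuousLinearMap.comp_apply, map_sub]
      rw [norm_sub_rev]
    rw [hd]
    have hsmall : dist (P (t₀ - t) x) x < ε/C := by
      apply hm3 (by simp; linarith)
      rw [Real.dist_eq, sub_zero, abs_of_pos (by linarith)]
      have : t₀ - t ≤ |t - t₀| := by rw [abs_sub_comm]; exact le_abs_self _
      exact lt_of_le_of_lt this (lt_of_lt_of_le habs (min_le_left _ _))
    calc ‖P t (P (t₀ - t) x - x)‖ ≤ ‖P t‖ * ‖P (t₀ - t) x - x‖ := (P t).le_opNorm _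
      _ ≤ C * ‖P (t₀ - t) x - x‖ :=
        mul_le_mul_of_nonneg_right (hC t ht' (by linarith)) (norm_nonneg _)
      _ < C * (ε/C) := by
        apply mul_lt_mul_of_pos_left _ (by linarith)
        rwa [dist_eq_norm] at hsmall
      _ = ε := by field_simp
  · simp [heq, hε]
  · -- t > t₀ : P t x - P t₀ x = P t₀ (P (t - t₀) x - x)
    have hkey : P t = (P t₀).comp (P (t - t₀)) := by
      have := hPsg t₀ (t - t₀) ht₀' (by linarith)
      rwa [add_sub_cancel] at this
    have hd : dist (P t x) (P t₀ x) = ‖P t₀ (P (t - t₀) x - x)‖ := by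
      rw [dist_eq_norm, hkey]
      simp only [ContinuousLinearMap.comp_apply, map_sub]
    rw [hd]
    have hsmall : dist (P (t - t₀) x) x < ε/C := by
      apply hm3 (by simp; linarith)
      rw [Real.dist_eq, sub_zero, abs_of_pos (by linarith)]
      have : t - t₀ ≤ |t - t₀| := le_abs_self _
      exact lt_of_le_of_lt this (lt_of_lt_of_le habs (min_le_left _ _))
    calc ‖P t₀ (P (t - t₀) x - x)‖ ≤ ‖P t₀‖ * ‖P (t - t₀) x - x‖ := (P t₀).le_opNorm _
      _ ≤ C * ‖P (t - t₀) x - x‖ :=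
        mul_le_mul_of_nonneg_right (hC t₀ ht₀' (by linarith)) (norm_nonneg _)
      _ < C * (ε/C) := by
        apply mul_lt_mul_of_pos_left _ (by linarith)
        rwa [dist_eq_norm] at hsmall
      _ = ε := by field_simp
end

section
/- Let G be a compact group and ψ : G → ℂ a continuous Hermitian conditionally positive-definite function with ψ(e) = 0. Then for each t ≥ 0 the function g ↦ exp(t·ψ(g)) is a continuous positive-definite function on G (Schönberg correspondence), equal to 1 at e. -/
open scoped ComplexOrder ComplexConjugate

/-- A function `φ : G → ℂ` is positive definite if
`∑ᵢⱼ conj(zᵢ) zⱼ φ(gᵢ⁻¹ gⱼ) ≥ 0` for all finite families. -/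
def IsPosDefFn {G : Type*} [Group G] (φ : G → ℂ) : Prop :=
  ∀ (n : ℕ) (g : Fin n → G) (z : Fin n → ℂ),
    0 ≤ ∑ i, ∑ j, conj (z i) * z j * φ ((g i)⁻¹ * g j)

/-- A function `ψ : G → ℂ` is conditionally positive definite if
`∑ᵢⱼ conj(zᵢ) zⱼ ψ(gᵢ⁻¹ gⱼ) ≥ 0` whenever `∑ᵢ zᵢ = 0`. -/
def IsCondPosDefFn {G : Type*} [Group G] (ψ : G → ℂ) : Prop :=
  ∀ (n : ℕ) (g : Fin n → G) (z : Fin n → ℂ), (∑ i, z i) = 0 →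
    0 ≤ ∑ i, ∑ j, conj (z i) * z j * ψ ((g i)⁻¹ * g j)

namespace SchoenbergAux

open Matrix Finset

variable {n : ℕ}

lemma form_eq (M : Matrix (Fin n) (Fin n) ℂ) (x : Fin n → ℂ) :
    dotProduct (star x) (M *ᵥ x) = ∑ i, ∑ j, conj (x i) * x j * M i j := by
  simp only [dotProduct, mulVec, Pi.star_apply, Finset.mul_sum, RCLike.star_def]
  exact Finset.sum_congr rfl fun i _ => Finset.sum_congr rfl fun j _ => by ring

lemma schur {A B : Matrix (Fin n) (Fin n) ℂ} (hA : A.PosSemidef) (hB : B.PosSemidef) :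
    (Matrix.of fun i j => A i j * B i j).PosSemidef := by
  obtain ⟨C, hC⟩ : ∃ X : Matrix (Fin n) (Fin n) ℂ, A = Xᴴ * X := by
    open scoped MatrixOrder in exact CStarAlgebra.nonneg_iff_eq_star_mul_self.mp hA.nonneg
  obtain ⟨D, hD⟩ : ∃ X : Matrix (Fin n) (Fin n) ℂ, B = Xᴴ * X := by
    open scoped MatrixOrder in exact CStarAlgebra.nonneg_iff_eq_star_mul_self.mp hB.nonneg
  have hA' : ∀ i j, A i j = ∑ k, conj (C k i) * C k j := by
    intro i j; rw [hC]
    simp only [Matrix.mul_apply, Matrix.conjTranspose_apply, starRingEnd_apply]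
  have hB' : ∀ i j, B i j = ∑ l, conj (D l i) * D l j := by
    intro i j; rw [hD]
    simp only [Matrix.mul_apply, Matrix.conjTranspose_apply, starRingEnd_apply]
  refine Matrix.PosSemidef.of_dotProduct_mulVec_nonneg ?_ ?_
  · ext i j
    simp only [conjTranspose_apply, of_apply, star_mul']
    rw [hA.1.apply, hB.1.apply]
  · intro x
    rw [form_eq]
    have key : ∀ i j : Fin n,
        conj (x i) * x j * (Matrix.of fun i j => A i j * B i j) i j
          = ∑ k, ∑ l, conj (x i * C k i * D l i) * (x j * C k j * D l j) := by
      intro i j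
      rw [of_apply, hA' i j, hB' i j, Finset.sum_mul_sum, Finset.mul_sum]
      refine Finset.sum_congr rfl fun k _ => ?_
      rw [Finset.mul_sum]
      refine Finset.sum_congr rfl fun l _ => ?_
      simp only [starRingEnd_apply, star_mul']
      ring
    have eq1 : (∑ i, ∑ j, conj (x i) * x j * (Matrix.of fun i j => A i j * B i j) i j)
        = ∑ k, ∑ l, conj (∑ i, x i * C k i * D l i) * (∑ j, x j * C k j * D l j) := by
      calc (∑ i, ∑ j, conj (x i) * x j * (Matrix.of fun i j => A i j * B i j) i j)
        = ∑ i, ∑ j, ∑ k, ∑ l, conj (x i * C k i * D l i) * (x j * C k j * D l j) :=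
          Finset.sum_congr rfl fun i _ => Finset.sum_congr rfl fun j _ => key i j
      _ = ∑ i, ∑ k, ∑ j, ∑ l, conj (x i * C k i * D l i) * (x j * C k j * D l j) :=
          Finset.sum_congr rfl fun i _ => Finset.sum_comm
      _ = ∑ i, ∑ k, ∑ l, ∑ j, conj (x i * C k i * D l i) * (x j * C k j * D l j) :=
          Finset.sum_congr rfl fun i _ => Finset.sum_congr rfl fun k _ => Finset.sum_comm
      _ = ∑ k, ∑ i, ∑ l, ∑ j, conj (x i * C k i * D l i) * (x j * C k j * D l j) :=
          Finset.sum_comm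
      _ = ∑ k, ∑ l, ∑ i, ∑ j, conj (x i * C k i * D l i) * (x j * C k j * D l j) :=
          Finset.sum_congr rfl fun k _ => Finset.sum_comm
      _ = ∑ k, ∑ l, conj (∑ i, x i * C k i * D l i) * (∑ j, x j * C k j * D l j) := by
          refine Finset.sum_congr rfl fun k _ => Finset.sum_congr rfl fun l _ => ?_
          rw [map_sum, Finset.sum_mul]
          exact Finset.sum_congr rfl fun i _ => by rw [Finset.mul_sum]
    rw [eq1]
    refine Finset.sum_nonneg fun k _ => Finset.sum_nonneg fun l _ => ?_
    simpa only [starRingEnd_apply] using star_mul_self_nonneg (∑ i, x i * C k i * D l i)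

lemma hpow_psd {M : Matrix (Fin n) (Fin n) ℂ} (hM : M.PosSemidef) (k : ℕ) :
    (Matrix.of fun i j => (M i j) ^ k).PosSemidef := by
  induction k with
  | zero =>
      refine Matrix.PosSemidef.of_dotProduct_mulVec_nonneg ?_ ?_
      · ext i j; simp [conjTranspose_apply]
      · intro x
        rw [form_eq]
        have : (∑ i, ∑ j, conj (x i) * x j * (Matrix.of fun _ _ => ((1:ℂ))) i j)
            = conj (∑ i, x i) * (∑ i, x i) := by
          rw [map_sum, Finset.sum_mul]
          refine Finset.sum_congr rfl fun i _ => ?_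
          rw [Finset.mul_sum]
          exact Finset.sum_congr rfl fun j _ => by simp
        simp only [pow_zero]
        rw [this]
        simpa only [starRingEnd_apply] using star_mul_self_nonneg (∑ i, x i)
  | succ k ih =>
      have h := schur ih hM
      have : (Matrix.of fun i j => (M i j) ^ (k + 1))
          = Matrix.of fun i j => (Matrix.of fun i j => (M i j) ^ k) i j * M i j := by
        ext i j; simp [pow_succ]
      rw [this]; exact h



lemma exp_form_nonneg {M : Matrix (Fin n) (Fin n) ℂ} (hM : M.PosSemidef) (x : Fin n → ℂ) :
    0 ≤ ∑ i, ∑ j, conj (x i) * x j * Complex.exp (M i j) := by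
  set Q : ℕ → ℂ := fun N => ∑ k ∈ Finset.range N, ∑ i, ∑ j,
      conj (x i) * x j * ((M i j) ^ k / (Nat.factorial k : ℂ)) with hQdef
  have hQnn : ∀ N, 0 ≤ Q N := by
    intro N
    refine Finset.sum_nonneg fun k _ => ?_
    have hp := (hpow_psd hM k).dotProduct_mulVec_nonneg x
    rw [form_eq] at hp
    have e : (∑ i, ∑ j, conj (x i) * x j * ((M i j) ^ k / (Nat.factorial k : ℂ)))
        = ((Nat.factorial k : ℝ)⁻¹ : ℝ) * ∑ i, ∑ j, conj (x i) * x j * (Matrix.of fun i j => (M i j) ^ k) i j := by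
      rw [Finset.mul_sum]
      refine Finset.sum_congr rfl fun i _ => ?_
      rw [Finset.mul_sum]
      refine Finset.sum_congr rfl fun j _ => ?_
      simp only [Matrix.of_apply]
      push_cast
      ring
    rw [e]
    exact mul_nonneg (Complex.zero_le_real.mpr (by positivity)) hp
  have hs : HasSum (fun k => ∑ i, ∑ j, conj (x i) * x j * ((M i j) ^ k / (Nat.factorial k : ℂ)))
      (∑ i, ∑ j, conj (x i) * x j * Complex.exp (M i j)) := by
    refine hasSum_sum fun i _ => hasSum_sum fun j _ => ?_
    have h0 : HasSum (fun k => (M i j) ^ k / (Nat.factorial k : ℂ)) (Complex.exp (M i j)) := by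
      rw [Complex.exp_eq_exp_ℂ]
      exact NormedSpace.expSeries_div_hasSum_exp (M i j)
    exact h0.mul_left _
  have hT := hs.tendsto_sum_nat
  have hcl : IsClosed {w : ℂ | 0 ≤ w} := by
    have : {w : ℂ | 0 ≤ w} = Complex.re ⁻¹' Set.Ici 0 ∩ Complex.im ⁻¹' {0} := by
      ext w
      simp [Complex.le_def, eq_comm]
    rw [this]
    exact (isClosed_Ici.preimage Complex.continuous_re).inter
      (isClosed_singleton.preimage Complex.continuous_im)
  exact hcl.mem_of_tendsto hT (Filter.Eventually.of_forall hQnn)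

end SchoenbergAux

/-- Schönberg correspondence. Let `G` be a compact group and
`ψ : G → ℂ` a continuous, Hermitian, conditionally positive-definite function
with `ψ(e) = 0`.  Then for each `t ≥ 0` the function `g ↦ exp(t ψ(g))` is a
continuous positive-definite function on `G`, equal to `1` at `e`. -/
theorem schoenberg_exp_positive_definite
    {G : Type*} [Group G] [TopologicalSpace G] [IsTopologicalGroup G] [CompactSpace G]
    (ψ : G → ℂ)
    (hcont : Continuous ψ)
    (hherm : ∀ g : G, ψ g⁻¹ = conj (ψ g))
    (hcpd : IsCondPosDefFn ψ)
    (hψe : ψ 1 = 0) :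
    ∀ t : ℝ, 0 ≤ t →
      Continuous (fun g => Complex.exp ((t : ℂ) * ψ g)) ∧
      IsPosDefFn (fun g => Complex.exp ((t : ℂ) * ψ g)) ∧
      Complex.exp ((t : ℂ) * ψ 1) = 1 := by
  intro t ht
  refine ⟨Complex.continuous_exp.comp (continuous_const.mul hcont), ?_, by
    rw [hψe, mul_zero, Complex.exp_zero]⟩
  intro n g z
  show 0 ≤ ∑ i, ∑ j, conj (z i) * z j * Complex.exp ((t : ℂ) * ψ ((g i)⁻¹ * g j))
  set M : Matrix (Fin n) (Fin n) ℂ :=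
    Matrix.of fun i j => (t : ℂ) * (ψ ((g i)⁻¹ * g j) - ψ (g j) - conj (ψ (g i))) with hMdef
  have hMpsd : M.PosSemidef := by
    refine Matrix.PosSemidef.of_dotProduct_mulVec_nonneg ?_ ?_
    · ext i j
      simp only [hMdef, Matrix.conjTranspose_apply, Matrix.of_apply, RCLike.star_def, map_mul,
        map_sub, Complex.conj_conj, Complex.conj_ofReal]
      have h1 : conj (ψ ((g j)⁻¹ * g i)) = ψ ((g i)⁻¹ * g j) := by
        rw [← hherm, mul_inv_rev, inv_inv]
      rw [h1]
      ring
    · intro x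
      rw [SchoenbergAux.form_eq]
      set S : ℂ := ∑ i, x i with hS
      set P : ℂ := ∑ j, x j * ψ (g j) with hP
      set R : ℂ := ∑ i, conj (x i) * conj (ψ (g i)) with hR
      set X : ℂ := ∑ i, ∑ j, conj (x i) * x j * ψ ((g i)⁻¹ * g j) with hX
      have c1 : (∑ i, ∑ j, conj (x i) * x j * ψ (g j)) = conj S * P := by
        rw [hS, hP, map_sum, Finset.sum_mul]
        refine Finset.sum_congr rfl fun i _ => ?_
        rw [Finset.mul_sum]
        exact Finset.sum_congr rfl fun j _ => by ring
      have c2 : (∑ i, ∑ j, conj (x i) * x j * conj (ψ (g i))) = R * S := by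
        rw [hR, hS, Finset.sum_mul]
        refine Finset.sum_congr rfl fun i _ => ?_
        rw [Finset.mul_sum]
        exact Finset.sum_congr rfl fun j _ => by ring
      have hQ' : (0 : ℂ) ≤ X - conj S * P - R * S := by
        have hsum : (∑ i, (Fin.cons (-S) x : Fin (n + 1) → ℂ) i) = 0 := by
          rw [Fin.sum_cons, ← hS]; ring
        have hQ := hcpd (n + 1) (Fin.cons 1 g) (Fin.cons (-S) x) hsum
        have e : (∑ i : Fin (n + 1), ∑ j : Fin (n + 1),
            conj ((Fin.cons (-S) x : Fin (n + 1) → ℂ) i) * (Fin.cons (-S) x : Fin (n + 1) → ℂ) j *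
              ψ (((Fin.cons 1 g : Fin (n + 1) → G) i)⁻¹ * (Fin.cons 1 g : Fin (n + 1) → G) j))
            = X - conj S * P - R * S := by
          calc (∑ i : Fin (n + 1), ∑ j : Fin (n + 1),
              conj ((Fin.cons (-S) x : Fin (n + 1) → ℂ) i) * (Fin.cons (-S) x : Fin (n + 1) → ℂ) j *
                ψ (((Fin.cons 1 g : Fin (n + 1) → G) i)⁻¹ * (Fin.cons 1 g : Fin (n + 1) → G) j))
              = (conj (-S) * (-S) * ψ ((1 : G)⁻¹ * 1)
                  + ∑ j, conj (-S) * x j * ψ ((1 : G)⁻¹ * g j))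
                + ∑ i, (conj (x i) * (-S) * ψ ((g i)⁻¹ * 1)
                  + ∑ j, conj (x i) * x j * ψ ((g i)⁻¹ * g j)) := by
                simp only [Fin.sum_univ_succ, Fin.cons_zero, Fin.cons_succ]
            _ = (conj (-S) * (-S) * 0 + ∑ j, conj (-S) * x j * ψ (g j))
                + ∑ i, (conj (x i) * (-S) * conj (ψ (g i))
                  + ∑ j, conj (x i) * x j * ψ ((g i)⁻¹ * g j)) := by
                simp only [inv_one, one_mul, mul_one, hψe, hherm]
            _ = X - conj S * P - R * S := by
                have d1 : (∑ j, conj (-S) * x j * ψ (g j)) = -(conj S * P) := by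
                  calc (∑ j, conj (-S) * x j * ψ (g j))
                      = ∑ j, -(conj S) * (x j * ψ (g j)) :=
                        Finset.sum_congr rfl fun j _ => by simp only [map_neg]; ring
                    _ = -(conj S) * ∑ j, x j * ψ (g j) := (Finset.mul_sum _ _ _).symm
                    _ = -(conj S * P) := by rw [← hP]; ring
                have d2 : (∑ i, (conj (x i) * (-S) * conj (ψ (g i))
                    + ∑ j, conj (x i) * x j * ψ ((g i)⁻¹ * g j))) = -(R * S) + X := by
                  rw [Finset.sum_add_distrib, ← hX]
                  congr 1
                  calc (∑ i, conj (x i) * (-S) * conj (ψ (g i)))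
                      = ∑ i, (conj (x i) * conj (ψ (g i))) * (-S) :=
                        Finset.sum_congr rfl fun i _ => by ring
                    _ = (∑ i, conj (x i) * conj (ψ (g i))) * (-S) := (Finset.sum_mul _ _ _).symm
                    _ = -(R * S) := by rw [← hR]; ring
                rw [d1, d2]
                ring
        rw [e] at hQ
        exact hQ
      have split : X - conj S * P - R * S
          = ∑ i, ∑ j, conj (x i) * x j * (ψ ((g i)⁻¹ * g j) - ψ (g j) - conj (ψ (g i))) := by
        rw [← c1, ← c2, hX, ← Finset.sum_sub_distrib, ← Finset.sum_sub_distrib]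
        refine Finset.sum_congr rfl fun i _ => ?_
        rw [← Finset.sum_sub_distrib, ← Finset.sum_sub_distrib]
        refine Finset.sum_congr rfl fun j _ => ?_
        ring
      have egoal : (∑ i, ∑ j, conj (x i) * x j * M i j)
          = (t : ℂ) * (X - conj S * P - R * S) := by
        rw [split, Finset.mul_sum]
        refine Finset.sum_congr rfl fun i _ => ?_
        rw [Finset.mul_sum]
        refine Finset.sum_congr rfl fun j _ => ?_
        simp only [hMdef, Matrix.of_apply]
        ring
      rw [egoal]
      exact mul_nonneg (Complex.zero_le_real.mpr ht) hQ'
  refine le_trans (SchoenbergAux.exp_form_nonneg hMpsd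
      (fun i => z i * Complex.exp ((t : ℂ) * ψ (g i)))) (le_of_eq ?_)
  refine Finset.sum_congr rfl fun i _ => Finset.sum_congr rfl fun j _ => ?_
  simp only [map_mul, ← Complex.exp_conj, map_mul, Complex.conj_ofReal, map_sub,
    Complex.conj_conj, hMdef, Matrix.of_apply]
  rw [show (t : ℂ) * ψ ((g i)⁻¹ * g j)
      = (t : ℂ) * conj (ψ (g i)) + (t : ℂ) * ψ (g j)
        + (t : ℂ) * (ψ ((g i)⁻¹ * g j) - ψ (g j) - conj (ψ (g i))) by ring,
    Complex.exp_add, Complex.exp_add]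
  ring
end

section
/- Let G be a compact group and ψ : G → ℂ a continuous, Hermitian, conditionally positive-definite function with ψ(e) = 0. Then there exists a continuous positive-definite function φ on G such that ψ(g) = φ(g) − φ(e) for all g ∈ G; equivalently, there is a constant c ∈ ℝ≥0 such that ψ + c is positive-definite. -/
open scoped ComplexOrder ComplexConjugate

/-- Guichardet. Let `G` be a compact group and `ψ : G → ℂ` a
continuous, Hermitian, conditionally positive-definite function with
`ψ(e) = 0`.  Then there is a continuous positive-definite function `φ` on `G`
with `ψ(g) = φ(g) − φ(e)` for all `g`; equivalently, there is `c ∈ ℝ≥0` such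
that `ψ + c` is positive-definite. -/
theorem guichardet
    {G : Type*} [Group G] [TopologicalSpace G] [IsTopologicalGroup G] [CompactSpace G]
    (ψ : G → ℂ)
    (hcont : Continuous ψ)
    (hherm : ∀ g : G, ψ g⁻¹ = conj (ψ g))
    (hcpd : IsCondPosDefFn ψ)
    (hψe : ψ 1 = 0) :
    (∃ φ : G → ℂ, Continuous φ ∧ IsPosDefFn φ ∧ ∀ g : G, ψ g = φ g - φ 1) ∧
    (∃ c : ℝ, 0 ≤ c ∧ IsPosDefFn (fun g => ψ g + (c : ℂ))) := by
  classical
  borelize G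
  set μ : MeasureTheory.Measure G := MeasureTheory.Measure.haar with hμdef
  have hconj' : ∀ (h x : G), ψ (x⁻¹ * h) = conj (ψ (h⁻¹ * x)) := by
    intro h x
    rw [← hherm, mul_inv_rev, inv_inv]
  have hInt : ∀ h : G, MeasureTheory.Integrable (fun x => ψ (h * x)) μ := fun h =>
    (hcont.comp (continuous_mul_left h)).integrable_of_hasCompactSupport
      (HasCompactSupport.of_compactSpace _)
  have hIntB : ∀ h : G, MeasureTheory.Integrable (fun x => ψ (x⁻¹ * h)) μ := fun h =>
    (hcont.comp ((continuous_mul_right h).comp continuous_inv)).integrable_of_hasCompactSupport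
      (HasCompactSupport.of_compactSpace _)
  have hψInt : MeasureTheory.Integrable ψ μ :=
    hcont.integrable_of_hasCompactSupport (HasCompactSupport.of_compactSpace _)
  set a : ℂ := ∫ x, ψ x ∂μ with ha
  set M : ℝ := (μ Set.univ).toReal with hM
  have hMpos : 0 < M :=
    ENNReal.toReal_pos (isOpen_univ.measure_pos μ ⟨1, trivial⟩).ne'
      (MeasureTheory.measure_ne_top _ _)
  -- re ψ ≤ 0 everywhere
  have hRe : ∀ x : G, (ψ x).re ≤ 0 := by
    intro x
    have h := hcpd 2 ![1, x] ![1, -1] (by simp [Fin.sum_univ_two])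
    rw [Complex.nonneg_iff] at h
    have h1 := h.1
    simp [Fin.sum_univ_two, hψe, hherm, Complex.add_re, Complex.neg_re, Complex.conj_re] at h1
    linarith
  have haRe : a.re ≤ 0 := by
    have h1 : ∫ x, (ψ x).re ∂μ = a.re := by simpa using integral_re hψInt
    rw [← h1]
    exact MeasureTheory.integral_nonpos fun x => hRe x
  set c : ℝ := -2 * a.re / M with hcdef
  have hc : 0 ≤ c := div_nonneg (by linarith) hMpos.le
  have hI1 : ∀ h : G, ∫ x, ψ (h * x) ∂μ = a := fun h =>
    MeasureTheory.integral_mul_left_eq_self ψ h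
  have hI2 : ∀ h : G, ∫ x, ψ (x⁻¹ * h) ∂μ = conj a := by
    intro h
    simp_rw [hconj' h]
    rw [integral_conj, hI1]
  -- main positivity
  have key : IsPosDefFn (fun g => ψ g + (c : ℂ)) := by
    intro n g z
    set S : ℂ := ∑ i, z i with hS
    set Q : ℂ := ∑ i, ∑ j, conj (z i) * z j * ψ ((g i)⁻¹ * g j) with hQ
    have hconjS : conj S = ∑ i, conj (z i) := map_sum (starRingEnd ℂ) z Finset.univ
    have hs' : conj S * S = ((Complex.normSq S : ℝ) : ℂ) :=
      Complex.normSq_eq_conj_mul_self.symm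
    set s : ℝ := Complex.normSq S with hsdef
    -- split the target sum
    have hsplit : ∑ i, ∑ j, conj (z i) * z j * (ψ ((g i)⁻¹ * g j) + (c : ℂ))
        = Q + conj S * S * (c : ℂ) := by
      simp only [mul_add, Finset.sum_add_distrib, hQ]
      congr 1
      calc ∑ i, ∑ j, conj (z i) * z j * (c : ℂ)
          = ∑ i, conj (z i) * ((∑ j, z j) * (c : ℂ)) := by
            simp [Finset.mul_sum, Finset.sum_mul, mul_assoc]
        _ = (∑ i, conj (z i)) * ((∑ j, z j) * (c : ℂ)) := by rw [← Finset.sum_mul]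
        _ = conj S * S * (c : ℂ) := by rw [← hconjS, ← hS, mul_assoc]
    -- Q is self-conjugate
    have hQconj : conj Q = Q := by
      have h1 : conj Q = ∑ i, ∑ j, conj (z j) * z i * ψ ((g j)⁻¹ * g i) := by
        rw [hQ, map_sum]
        refine Finset.sum_congr rfl fun i _ => ?_
        rw [map_sum]
        refine Finset.sum_congr rfl fun j _ => ?_
        rw [map_mul, map_mul, ← hherm, mul_inv_rev, inv_inv, Complex.conj_conj]
        ring
      rw [h1, Finset.sum_comm, hQ]
    have hQim : Q.im = 0 := by
      have h2 := congrArg Complex.im hQconj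
      simp only [Complex.conj_im] at h2
      linarith
    -- pointwise inequality from conditional positive definiteness
    set F : G → ℂ := fun x => Q + (∑ i, conj (z i) * -S * ψ ((g i)⁻¹ * x))
        + (∑ j, conj (-S) * z j * ψ (x⁻¹ * g j)) with hF
    have hpt : ∀ x : G, 0 ≤ F x := by
      intro x
      have hz0 : (∑ i, (Fin.snoc z (-S) : Fin (n+1) → ℂ) i) = 0 := by
        rw [Fin.sum_univ_castSucc]
        simp [Fin.snoc_castSucc, Fin.snoc_last, ← hS]
      have h := hcpd (n + 1) (Fin.snoc g x) (Fin.snoc z (-S)) hz0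
      have heq : ∑ i : Fin (n+1), ∑ j : Fin (n+1),
          conj ((Fin.snoc z (-S) : Fin (n+1) → ℂ) i) * (Fin.snoc z (-S) : Fin (n+1) → ℂ) j *
            ψ (((Fin.snoc g x : Fin (n+1) → G) i)⁻¹ * (Fin.snoc g x : Fin (n+1) → G) j) = F x := by
        simp only [Fin.sum_univ_castSucc, Fin.snoc_castSucc, Fin.snoc_last,
          Finset.sum_add_distrib, inv_mul_cancel, hψe, mul_zero, add_zero, hF, hQ]
        ring
      rwa [heq] at h
    -- integrability of F
    have hIntA2 : ∀ i : Fin n,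
        MeasureTheory.Integrable (fun x => conj (z i) * (-S * ψ ((g i)⁻¹ * x))) μ :=
      fun i => ((hInt _).const_mul _).const_mul _
    have hIntB2 : ∀ j : Fin n,
        MeasureTheory.Integrable (fun x => conj (-S) * (z j * ψ (x⁻¹ * g j))) μ :=
      fun j => ((hIntB _).const_mul _).const_mul _
    have hIntSumA : MeasureTheory.Integrable
        (fun x => ∑ i, conj (z i) * -S * ψ ((g i)⁻¹ * x)) μ := by
      simp_rw [mul_assoc]
      exact MeasureTheory.integrable_finset_sum _ fun i _ => hIntA2 i
    have hIntSumB : MeasureTheory.Integrable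
        (fun x => ∑ j, conj (-S) * z j * ψ (x⁻¹ * g j)) μ := by
      simp_rw [mul_assoc]
      exact MeasureTheory.integrable_finset_sum _ fun j _ => hIntB2 j
    have hFint : MeasureTheory.Integrable F μ :=
      ((MeasureTheory.integrable_const Q).add hIntSumA).add hIntSumB
    have h0 : (0 : ℝ) ≤ (∫ x, F x ∂μ).re := by
      have h3 := integral_re hFint
      simp only [RCLike.re_to_complex] at h3
      rw [← h3]
      exact MeasureTheory.integral_nonneg fun x => (Complex.nonneg_iff.mp (hpt x)).1
    -- compute the integral of F
    have hIA : ∫ x, (∑ i, conj (z i) * -S * ψ ((g i)⁻¹ * x)) ∂μ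
        = conj S * -S * a := by
      rw [MeasureTheory.integral_finset_sum _ (fun i _ => by
        simpa [mul_assoc] using hIntA2 i)]
      have h4 : ∀ i : Fin n, ∫ x, conj (z i) * -S * ψ ((g i)⁻¹ * x) ∂μ
          = conj (z i) * (-S * a) := by
        intro i
        simp_rw [mul_assoc]
        rw [MeasureTheory.integral_const_mul, MeasureTheory.integral_const_mul, hI1]
      simp_rw [h4]
      rw [← Finset.sum_mul, ← hconjS, mul_assoc]
    have hIB : ∫ x, (∑ j, conj (-S) * z j * ψ (x⁻¹ * g j)) ∂μ
        = conj (-S) * S * conj a := by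
      rw [MeasureTheory.integral_finset_sum _ (fun j _ => by
        simpa [mul_assoc] using hIntB2 j)]
      have h5 : ∀ j : Fin n, ∫ x, conj (-S) * z j * ψ (x⁻¹ * g j) ∂μ
          = conj (-S) * (z j * conj a) := by
        intro j
        simp_rw [mul_assoc]
        rw [MeasureTheory.integral_const_mul, MeasureTheory.integral_const_mul, hI2]
      simp_rw [h5]
      rw [← Finset.mul_sum, ← Finset.sum_mul, ← hS, mul_assoc]
    have hQA : MeasureTheory.Integrable
        (fun x => Q + ∑ i, conj (z i) * -S * ψ ((g i)⁻¹ * x)) μ :=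
      (MeasureTheory.integrable_const Q).add hIntSumA
    have hIF : ∫ x, F x ∂μ = M • Q + conj S * -S * a + conj (-S) * S * conj a := by
      rw [hF]
      rw [MeasureTheory.integral_add hQA hIntSumB,
        MeasureTheory.integral_add (MeasureTheory.integrable_const Q) hIntSumA,
        MeasureTheory.integral_const, hIA, hIB]
      rfl
    -- extract the real inequality
    have hkey : 2 * s * a.re ≤ M * Q.re := by
      have h6 : (∫ x, F x ∂μ).re = M * Q.re - s * a.re - s * a.re := by
        rw [hIF]
        have e1 : conj S * -S * a = -((s : ℂ) * a) := by
          have h10 : conj S * -S * a = -(conj S * S * a) := by ring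
          rw [h10, hs']
        have e2 : conj (-S) * S * conj a = -((s : ℂ) * conj a) := by
          have h11 : conj (-S) * S * conj a = -(conj S * S * conj a) := by
            rw [map_neg]; ring
          rw [h11, hs']
        rw [e1, e2]
        simp [Complex.add_re, Complex.neg_re, Complex.re_ofReal_mul, Complex.smul_re,
          Complex.conj_re]
        ring
      rw [h6] at h0
      linarith
    -- conclude
    simp only []
    rw [hsplit, Complex.nonneg_iff]
    constructor
    · have h7 : (Q + conj S * S * (c : ℂ)).re = Q.re + s * c := by
        rw [hs', ← Complex.ofReal_mul]
        simp [Complex.add_re]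
      rw [h7]
      have hsnn : 0 ≤ s := Complex.normSq_nonneg S
      have h8 : s * c * M = -(2 * s * a.re) := by
        have h12 : s * c * M = -2 * a.re * s * (M / M) := by rw [hcdef]; ring
        rw [h12, div_self hMpos.ne']; ring
      nlinarith [hkey, hMpos, mul_pos hMpos hMpos]
    · rw [hs', ← Complex.ofReal_mul]
      simp [Complex.add_im, hQim]
  refine ⟨⟨fun g => ψ g + (c : ℂ), hcont.add continuous_const, key, fun g => by simp [hψe]⟩,
    ⟨c, hc, key⟩⟩
end
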